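/- arXiv:1201.3377 — 5 statements merged into one kernel-verified Lean document; each statement's English description precedes it below -/
import Mathlib

section
/- Let P be a finite poset with a strictly order-preserving function ρ : P → ℕ, and let ζ̄ be a function in the incidence algebra of P with ζ̄(x,x) = 1 for all x. If the values ζ̄(x,z) are fixed arbitrarily for all x < z with ρ(z) − ρ(x) odd, then there is a unique extension of ζ̄ to pairs with even rank difference, given by ζ̄(x,z) = −(1/2)·∑_{x<y<z} (−1)^{ρ(y)−ρ(x)}·ζ̄(x,y)·ζ̄(y,z), making (P,ρ,ζ̄) an Eulerian quasi-graded poset. -/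
open scoped Classical
open Finset

noncomputable section

/-- The free noncommutative algebra `ℚ⟨a,b⟩`. -/
abbrev QA : Type := FreeAlgebra ℚ Bool

/-- The variable `a`. -/
def av : QA := FreeAlgebra.ι ℚ true

/-- The variable `b`. -/
def bv : QA := FreeAlgebra.ι ℚ false

/-- `c = a + b`. -/
def cvar : QA := av + bv

/-- `d = ab + ba`. -/
def dvar : QA := av * bv + bv * av

variable {α : Type*}

/-- The `ζ̄`-weight of a chain encoded as `f : Fin (k+1) → α`:
the product of the values of `ζ̄` on consecutive elements. -/
def chainZeta (ζ : α → α → ℚ) {k : ℕ} (f : Fin (k + 1) → α) : ℚ :=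
  (List.ofFn (fun i : Fin k => ζ (f i.castSucc) (f i.succ))).prod

/-- The `ab`-weight of a chain: `(a-b)^{g₁-1} · b · (a-b)^{g₂-1} · b ⋯ b · (a-b)^{g_k-1}`
where `gᵢ` are the successive rank gaps along the chain. -/
def chainWt (ρ : α → ℕ) {k : ℕ} (f : Fin (k + 1) → α) : QA :=
  (List.ofFn (fun i : Fin k =>
    (if (i : ℕ) = 0 then 1 else bv) *
      (av - bv) ^ (ρ (f i.succ) - ρ (f i.castSucc) - 1))).prod

/-- `f` encodes a (strict) chain from `x` to `z`. -/
def IsChainFrom [PartialOrder α] {k : ℕ} (f : Fin (k + 1) → α) (x z : α) : Prop :=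
  StrictMono f ∧ f 0 = x ∧ f (Fin.last k) = z

/-- The ab-index `Ψ` of the interval `[x,z]` of a quasi-graded poset:
the sum over all chains from `x` to `z` of `ζ̄(c) · wt(c)`. -/
def abIndex [PartialOrder α] [Fintype α] (ρ : α → ℕ) (ζ : α → α → ℚ) (x z : α) : QA :=
  ∑ k ∈ Finset.range (Fintype.card α), ∑ f : Fin (k + 1) → α,
    if IsChainFrom f x z then chainZeta ζ f • chainWt ρ f else 0

/-- `(P,ρ,ζ̄)` is a quasi-graded poset: `ρ` is strictly order-preserving and `ζ̄`
is an element of the incidence algebra with `ζ̄(x,x) = 1`. -/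
def IsQuasiGraded [PartialOrder α] (ρ : α → ℕ) (ζ : α → α → ℚ) : Prop :=
  StrictMono ρ ∧ (∀ x, ζ x x = 1) ∧ ∀ x y : α, ¬ x ≤ y → ζ x y = 0

/-- Convolution in the incidence algebra. -/
def iaMul [PartialOrder α] [Fintype α] (f g : α → α → ℚ) : α → α → ℚ :=
  fun x z => ∑ y ∈ Finset.univ.filter (fun y => x ≤ y ∧ y ≤ z), f x y * g y z

/-- The identity `δ` of the incidence algebra. -/
def iaDelta : α → α → ℚ := fun x z => if x = z then 1 else 0

/-- The Eulerian condition on the interval `[x,z]`: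
`∑_{x ≤ y ≤ z} (-1)^{ρ(y)-ρ(x)} ζ̄(x,y) ζ̄(y,z) = δ_{x,z}`. -/
def EulerianAt [PartialOrder α] [Fintype α] (ρ : α → ℕ) (ζ : α → α → ℚ) (x z : α) : Prop :=
  (∑ y ∈ Finset.univ.filter (fun y => x ≤ y ∧ y ≤ z),
    (-1 : ℚ) ^ (ρ y - ρ x) * ζ x y * ζ y z) = iaDelta x z

/-- `(P,ρ,ζ̄)` is Eulerian. -/
def IsEulerian [PartialOrder α] [Fintype α] (ρ : α → ℕ) (ζ : α → α → ℚ) : Prop :=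
  ∀ x z : α, x ≤ z → EulerianAt ρ ζ x z

/-- The flag `f̄`-vector: `f̄_S = ∑_c ζ̄(c)` over chains from `x` to `z`
whose interior elements have ranks exactly `S`. -/
def flagF [PartialOrder α] [Fintype α] (ρ : α → ℕ) (ζ : α → α → ℚ)
    (x z : α) (S : Finset ℕ) : ℚ :=
  ∑ k ∈ Finset.range (Fintype.card α), ∑ f : Fin (k + 1) → α,
    if IsChainFrom f x z ∧
        (Finset.univ.filter (fun i : Fin (k + 1) => i ≠ 0 ∧ i ≠ Fin.last k)).image
          (fun i => ρ (f i)) = S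
      then chainZeta ζ f else 0

/-- The flag `h̄`-vector: `h̄_S = ∑_{T ⊆ S} (-1)^{|S-T|} f̄_T`. -/
def flagH [PartialOrder α] [Fintype α] (ρ : α → ℕ) (ζ : α → α → ℚ)
    (x z : α) (S : Finset ℕ) : ℚ :=
  ∑ T ∈ S.powerset, (-1 : ℚ) ^ (S.card - T.card) * flagF ρ ζ x z T

/-- Chains with respect to an explicit strict relation `lt`. -/
def IsChainFromRel (lt : α → α → Prop) {k : ℕ} (f : Fin (k + 1) → α) (x z : α) : Prop :=
  (∀ i j : Fin (k + 1), i < j → lt (f i) (f j)) ∧ f 0 = x ∧ f (Fin.last k) = z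

/-- The ab-index with respect to an explicit strict order relation `lt`. -/
def abIndexRel [Fintype α] (lt : α → α → Prop) (ρ : α → ℕ) (ζ : α → α → ℚ)
    (x z : α) : QA :=
  ∑ k ∈ Finset.range (Fintype.card α), ∑ f : Fin (k + 1) → α,
    if IsChainFromRel lt f x z then chainZeta ζ f • chainWt ρ f else 0

/-- The Eulerian condition with respect to an explicit order relation `le`. -/
def IsEulerianRel [Fintype α] (le : α → α → Prop) (ρ : α → ℕ) (ζ : α → α → ℚ) : Prop :=
  ∀ x z : α, le x z →
    (∑ y ∈ Finset.univ.filter (fun y => le x y ∧ le y z),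
      (-1 : ℚ) ^ (ρ y - ρ x) * ζ x y * ζ y z) = (if x = z then (1 : ℚ) else 0)

/-- Carrier of the zipped poset: remove `x` and `y`; the element `z` plays
the role of the new element `w`. -/
abbrev ZipCarrier (α : Type*) (x y : α) : Type _ := {u : α // u ≠ x ∧ u ≠ y}

/-- The strict order of the zipped poset: `u <_Q w` iff `u < x` or `u < y`,
`w <_Q v` iff `x < v`, and otherwise the order is inherited from `P`. -/
def zipLt [PartialOrder α] (x y z : α) : ZipCarrier α x y → ZipCarrier α x y → Prop :=
  fun u v =>
    if u.1 = z then v.1 ≠ z ∧ x < v.1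
    else if v.1 = z then u.1 < x ∨ u.1 < y
    else u.1 < v.1

/-- The (non-strict) order of the zipped poset. -/
def zipLe [PartialOrder α] (x y z : α) : ZipCarrier α x y → ZipCarrier α x y → Prop :=
  fun u v => zipLt x y z u v ∨ u = v

/-- The rank function of the zipped poset: `ρ_Q(w) = ρ(x)`, otherwise inherited. -/
def zipRank [PartialOrder α] (ρ : α → ℕ) (x y z : α) : ZipCarrier α x y → ℕ :=
  fun u => if u.1 = z then ρ x else ρ u.1

/-- The weighted zeta function of the zipped poset:
`ζ̄_Q(w,v) = ζ̄(x,v)`, `ζ̄_Q(u,w) = ζ̄(u,x) + ζ̄(u,y) - ζ̄(u,z)`, otherwise inherited. -/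
def zipZeta [PartialOrder α] (ζ : α → α → ℚ) (x y z : α) :
    ZipCarrier α x y → ZipCarrier α x y → ℚ :=
  fun u v =>
    if v.1 = z then (if u.1 = z then 1 else ζ u.1 x + ζ u.1 y - ζ u.1 z)
    else if u.1 = z then ζ x v.1
    else ζ u.1 v.1

namespace EulerianExtAux

variable [Fintype α] [PartialOrder α]

/-- The closed interval as a finset. -/
def Fset (x z : α) : Finset α := Finset.univ.filter fun y => x ≤ y ∧ y ≤ z

/-- The open interval as a finset. -/
def Iset (x z : α) : Finset α := Finset.univ.filter fun y => x < y ∧ y < z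

lemma mem_Iset {x z y : α} : y ∈ Iset x z ↔ x < y ∧ y < z := by
  simp [Iset]

lemma Fset_self (x : α) : Fset x x = {x} := by
  ext y; simp [Fset, le_antisymm_iff, eq_comm, and_comm]

lemma Fset_eq {x z : α} (h : x < z) :
    Fset x z = insert x (insert z (Iset x z)) := by
  ext y
  simp only [Fset, Iset, mem_filter, mem_univ, true_and, mem_insert]
  constructor
  · rintro ⟨h1, h2⟩
    rcases h1.lt_or_eq with h1' | rfl
    · rcases h2.lt_or_eq with h2' | rfl
      · exact Or.inr (Or.inr ⟨h1', h2'⟩)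
      · exact Or.inr (Or.inl rfl)
    · exact Or.inl rfl
  · rintro (rfl | rfl | ⟨h1, h2⟩)
    · exact ⟨le_refl _, h.le⟩
    · exact ⟨h.le, le_refl _⟩
    · exact ⟨h1.le, h2.le⟩

lemma sum_Fset {x z : α} (h : x < z) (g : α → ℚ) :
    ∑ y ∈ Fset x z, g y = g x + g z + ∑ y ∈ Iset x z, g y := by
  rw [Fset_eq h, Finset.sum_insert, Finset.sum_insert]
  · ring
  · simp [Iset]
  · simp [Iset, h.ne, lt_irrefl]

/-- The extension of `ζodd` defined by the even-interval recursion. -/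
noncomputable def zeta (ρ : α → ℕ) (hρ : StrictMono ρ) (ζodd : α → α → ℚ)
    (x z : α) : ℚ :=
  if x = z then 1
  else if hlt : x < z then
    if Odd (ρ z - ρ x) then ζodd x z
    else -(1/2) * ∑ y ∈ (Iset x z).attach,
        (-1:ℚ) ^ (ρ y.1 - ρ x) * zeta ρ hρ ζodd x y.1 * zeta ρ hρ ζodd y.1 z
  else 0
termination_by ρ z - ρ x
decreasing_by
  all_goals
    obtain ⟨h1, h2⟩ := mem_Iset.mp y.2
    have e1 := hρ h1
    have e2 := hρ h2
    omega

variable {ρ : α → ℕ} {hρ : StrictMono ρ} {ζodd : α → α → ℚ}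

lemma zeta_self (x : α) : zeta ρ hρ ζodd x x = 1 := by
  rw [zeta]; simp

lemma zeta_not_le {x z : α} (h : ¬ x ≤ z) : zeta ρ hρ ζodd x z = 0 := by
  rw [zeta]
  have h1 : x ≠ z := fun e => h (e ▸ le_refl x)
  have h2 : ¬ x < z := fun e => h e.le
  simp [h1, h2]

lemma zeta_odd {x z : α} (h : x < z) (ho : Odd (ρ z - ρ x)) :
    zeta ρ hρ ζodd x z = ζodd x z := by
  rw [zeta]; simp [h, h.ne, ho]

lemma zeta_even {x z : α} (h : x < z) (he : ¬ Odd (ρ z - ρ x)) :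
    zeta ρ hρ ζodd x z = -(1/2) * ∑ y ∈ Iset x z,
      (-1:ℚ) ^ (ρ y - ρ x) * zeta ρ hρ ζodd x y * zeta ρ hρ ζodd y z := by
  rw [zeta]
  simp only [h, h.ne, he, if_false, dif_pos, if_true]
  rw [Finset.sum_attach (Iset x z)
    (fun y => (-1:ℚ) ^ (ρ y - ρ x) * zeta ρ hρ ζodd x y * zeta ρ hρ ζodd y z)]

lemma fubini (x z : α) (g : α → α → ℚ) :
    ∑ w ∈ Fset x z, ∑ y ∈ Fset x w, g y w
      = ∑ y ∈ Fset x z, ∑ w ∈ Fset y z, g y w := by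
  have push : ∀ (c : Prop) [Decidable c] (s : Finset α) (f : α → ℚ),
      (if c then ∑ w ∈ s, f w else 0) = ∑ w ∈ s, if c then f w else 0 := by
    intro c _ s f; split_ifs <;> simp
  simp only [Fset, Finset.sum_filter, push]
  rw [Finset.sum_comm]
  refine Finset.sum_congr rfl fun y _ => Finset.sum_congr rfl fun w _ => ?_
  by_cases hxy : x ≤ y <;> by_cases hyw : y ≤ w <;> by_cases hwz : w ≤ z
  · simp [hxy, hyw, hwz, hxy.trans hyw, hyw.trans hwz]
  all_goals simp_all

/-- The two Eulerian-type sums are `δ`, by strong induction on the rank gap. -/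
lemma main_aux (ρ : α → ℕ) (hρ : StrictMono ρ) (ζodd : α → α → ℚ) :
    ∀ n : ℕ, ∀ x z : α, x ≤ z → ρ z - ρ x ≤ n →
      ((∑ y ∈ Fset x z, (-1:ℚ) ^ (ρ y - ρ x) * zeta ρ hρ ζodd x y * zeta ρ hρ ζodd y z)
        = if x = z then 1 else 0) ∧
      ((∑ y ∈ Fset x z, zeta ρ hρ ζodd x y * ((-1:ℚ) ^ (ρ z - ρ y) * zeta ρ hρ ζodd y z))
        = if x = z then 1 else 0) := by
  intro n
  induction n using Nat.strong_induction_on with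
  | _ n ih =>
    intro x z hxz hn
    set Z := zeta ρ hρ ζodd with hZ
    have hZ1 : ∀ u : α, Z u u = 1 := fun u => zeta_self u
    rcases hxz.lt_or_eq with hlt | rfl
    swap
    · constructor <;> simp [Fset_self, hZ1]
    have hne : x ≠ z := hlt.ne
    have hrk : ρ x < ρ z := hρ hlt
    -- base facts about interior points
    have hIest : ∀ y ∈ Iset x z, ρ y - ρ x < n ∧ ρ z - ρ y < n ∧
        ρ x < ρ y ∧ ρ y < ρ z := by
      intro y hy
      obtain ⟨h1, h2⟩ := mem_Iset.mp hy
      have e1 := hρ h1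
      have e2 := hρ h2
      omega
    -- the interior sums
    set S : ℚ := ∑ y ∈ Iset x z, (-1:ℚ) ^ (ρ y - ρ x) * Z x y * Z y z with hS
    set S' : ℚ := ∑ y ∈ Iset x z, Z x y * ((-1:ℚ) ^ (ρ z - ρ y) * Z y z) with hS'
    -- S' = (-1)^(ρ z - ρ x) * S
    have hSS' : S' = (-1:ℚ) ^ (ρ z - ρ x) * S := by
      rw [hS, hS', Finset.mul_sum]
      refine Finset.sum_congr rfl fun y hy => ?_
      obtain ⟨_, _, e1, e2⟩ := hIest y hy
      have hadd : (ρ y - ρ x) + (ρ z - ρ y) = ρ z - ρ x := by omega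
      have hsq : ((-1:ℚ)) ^ (ρ y - ρ x) * (-1:ℚ) ^ (ρ y - ρ x) = 1 := by
        rw [← pow_add]
        exact Even.neg_one_pow ⟨ρ y - ρ x, by omega⟩
      have : ((-1:ℚ)) ^ (ρ z - ρ y)
          = (-1:ℚ) ^ (ρ z - ρ x) * (-1:ℚ) ^ (ρ y - ρ x) := by
        rw [← hadd, pow_add]
        calc (-1:ℚ) ^ (ρ z - ρ y)
            = ((-1:ℚ) ^ (ρ y - ρ x) * (-1:ℚ) ^ (ρ y - ρ x)) * (-1:ℚ) ^ (ρ z - ρ y) := by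
              rw [hsq, one_mul]
          _ = (-1:ℚ) ^ (ρ y - ρ x) * (-1:ℚ) ^ (ρ z - ρ y) * (-1:ℚ) ^ (ρ y - ρ x) := by ring
      rw [this]; ring
    -- expansions of L and R
    have hLexp : (∑ y ∈ Fset x z, (-1:ℚ) ^ (ρ y - ρ x) * Z x y * Z y z)
        = Z x z + (-1:ℚ) ^ (ρ z - ρ x) * Z x z + S := by
      rw [sum_Fset hlt]
      simp [hZ1, hS]
    have hRexp : (∑ y ∈ Fset x z, Z x y * ((-1:ℚ) ^ (ρ z - ρ y) * Z y z))
        = (-1:ℚ) ^ (ρ z - ρ x) * Z x z + Z x z + S' := by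
      rw [sum_Fset hlt]
      simp [hZ1, hS']
    -- the double-sum identity giving L = R
    have hLR : (∑ y ∈ Fset x z, (-1:ℚ) ^ (ρ y - ρ x) * Z x y * Z y z)
        = (∑ y ∈ Fset x z, Z x y * ((-1:ℚ) ^ (ρ z - ρ y) * Z y z)) := by
      have hE := fubini x z
        (fun y w => ((-1:ℚ) ^ (ρ y - ρ x) * Z x y * Z y w)
          * ((-1:ℚ) ^ (ρ z - ρ w) * Z w z))
      -- left side of hE
      have hEL : (∑ w ∈ Fset x z, ∑ y ∈ Fset x w,
            ((-1:ℚ) ^ (ρ y - ρ x) * Z x y * Z y w) * ((-1:ℚ) ^ (ρ z - ρ w) * Z w z))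
          = (-1:ℚ) ^ (ρ z - ρ x) * Z x z
            + (∑ y ∈ Fset x z, (-1:ℚ) ^ (ρ y - ρ x) * Z x y * Z y z) := by
        have step : ∀ w ∈ Fset x z,
            (∑ y ∈ Fset x w,
              ((-1:ℚ) ^ (ρ y - ρ x) * Z x y * Z y w) * ((-1:ℚ) ^ (ρ z - ρ w) * Z w z))
            = (∑ y ∈ Fset x w, (-1:ℚ) ^ (ρ y - ρ x) * Z x y * Z y w)
              * ((-1:ℚ) ^ (ρ z - ρ w) * Z w z) := by
          intro w _; rw [Finset.sum_mul]
        rw [Finset.sum_congr rfl step, sum_Fset hlt]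
        have t1 : (∑ y ∈ Fset x x, (-1:ℚ) ^ (ρ y - ρ x) * Z x y * Z y x) = 1 := by
          simp [Fset_self, hZ1]
        have t3 : (∑ w ∈ Iset x z,
            (∑ y ∈ Fset x w, (-1:ℚ) ^ (ρ y - ρ x) * Z x y * Z y w)
              * ((-1:ℚ) ^ (ρ z - ρ w) * Z w z)) = 0 := by
          refine Finset.sum_eq_zero fun w hw => ?_
          obtain ⟨hw1, _, _, _⟩ := hIest w hw
          have := (ih (ρ w - ρ x) (by omega) x w (mem_Iset.mp hw).1.le le_rfl).1
          rw [this, if_neg (mem_Iset.mp hw).1.ne, zero_mul]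
        rw [t1, t3]
        simp [hZ1]
      -- right side of hE
      have hER : (∑ y ∈ Fset x z, ∑ w ∈ Fset y z,
            ((-1:ℚ) ^ (ρ y - ρ x) * Z x y * Z y w) * ((-1:ℚ) ^ (ρ z - ρ w) * Z w z))
          = (∑ y ∈ Fset x z, Z x y * ((-1:ℚ) ^ (ρ z - ρ y) * Z y z))
            + (-1:ℚ) ^ (ρ z - ρ x) * Z x z := by
        have step : ∀ y ∈ Fset x z,
            (∑ w ∈ Fset y z,
              ((-1:ℚ) ^ (ρ y - ρ x) * Z x y * Z y w) * ((-1:ℚ) ^ (ρ z - ρ w) * Z w z))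
            = ((-1:ℚ) ^ (ρ y - ρ x) * Z x y)
              * (∑ w ∈ Fset y z, Z y w * ((-1:ℚ) ^ (ρ z - ρ w) * Z w z)) := by
          intro y _
          rw [Finset.mul_sum]
          exact Finset.sum_congr rfl fun w _ => by ring
        rw [Finset.sum_congr rfl step, sum_Fset hlt]
        have t2 : (∑ w ∈ Fset z z, Z z w * ((-1:ℚ) ^ (ρ z - ρ w) * Z w z)) = 1 := by
          simp [Fset_self, hZ1]
        have t3 : (∑ y ∈ Iset x z,
            ((-1:ℚ) ^ (ρ y - ρ x) * Z x y)
              * (∑ w ∈ Fset y z, Z y w * ((-1:ℚ) ^ (ρ z - ρ w) * Z w z))) = 0 := by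
          refine Finset.sum_eq_zero fun y hy => ?_
          obtain ⟨_, hy2, _, _⟩ := hIest y hy
          have := (ih (ρ z - ρ y) (by omega) y z (mem_Iset.mp hy).2.le le_rfl).2
          rw [this, if_neg (mem_Iset.mp hy).2.ne, mul_zero]
        rw [t2, t3]
        simp [hZ1]
      have := hEL.symm.trans (hE.trans hER)
      linarith
    -- finish by parity cases
    have hkey : S = (-1:ℚ) ^ (ρ z - ρ x) * S := by
      rw [hLexp, hRexp, hSS'] at hLR
      linarith
    rcases Nat.even_or_odd (ρ z - ρ x) with hpar | hpar
    · -- even case: Z x z = -(1/2) S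
      have hzeq : Z x z = -(1/2) * S := by
        rw [hZ, zeta_even hlt (by
          rw [Nat.odd_iff, Nat.even_iff] at *; omega), ← hZ, ← hS]
      have hpow : ((-1:ℚ)) ^ (ρ z - ρ x) = 1 := Even.neg_one_pow hpar
      constructor
      · rw [hLexp, if_neg hne, hpow, hzeq]; ring
      · rw [hRexp, if_neg hne, hSS', hpow, hzeq]; ring
    · have hpow : ((-1:ℚ)) ^ (ρ z - ρ x) = -1 := Odd.neg_one_pow hpar
      have hS0 : S = 0 := by rw [hpow] at hkey; linarith
      constructor
      · rw [hLexp, if_neg hne, hpow, hS0]; ring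
      · rw [hRexp, if_neg hne, hSS', hpow, hS0]; ring

lemma sum_filter_split {x z : α} (h : x < z) (g : α → ℚ) :
    ∑ y ∈ Finset.univ.filter (fun y => x ≤ y ∧ y ≤ z), g y
      = g x + g z + ∑ y ∈ Finset.univ.filter (fun y => x < y ∧ y < z), g y :=
  sum_Fset h g

/-- Any Eulerian quasi-graded `ζ` satisfies the even-gap formula. -/
lemma even_formula (ρ : α → ℕ) (hρ : StrictMono ρ) (ζ : α → α → ℚ)
    (h1 : ∀ x, ζ x x = 1) (h4 : IsEulerian ρ ζ) :
    ∀ x z : α, x < z → Even (ρ z - ρ x) →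
      ζ x z = -(1/2) * ∑ y ∈ Finset.univ.filter (fun y => x < y ∧ y < z),
        (-1:ℚ) ^ (ρ y - ρ x) * ζ x y * ζ y z := by
  intro x z hlt hev
  have hE := h4 x z hlt.le
  unfold EulerianAt iaDelta at hE
  rw [sum_filter_split hlt] at hE
  rw [if_neg hlt.ne] at hE
  have hpow : ((-1:ℚ)) ^ (ρ z - ρ x) = 1 := Even.neg_one_pow hev
  have hz0 : ρ x - ρ x = 0 := by omega
  rw [hz0, pow_zero, one_mul, h1 x, one_mul, hpow, one_mul, h1 z, mul_one] at hE
  linarith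

/-- Uniqueness: any Eulerian quasi-graded extension of `ζodd` equals `zeta`. -/
lemma unique_aux (ρ : α → ℕ) (hρ : StrictMono ρ) (ζodd : α → α → ℚ)
    (ζ : α → α → ℚ) (h1 : ∀ x, ζ x x = 1)
    (h2 : ∀ x y : α, ¬ x ≤ y → ζ x y = 0)
    (h3 : ∀ x y : α, x < y → Odd (ρ y - ρ x) → ζ x y = ζodd x y)
    (h4 : IsEulerian ρ ζ) :
    ∀ n : ℕ, ∀ x z : α, ρ z - ρ x ≤ n → ζ x z = zeta ρ hρ ζodd x z := by
  intro n
  induction n using Nat.strong_induction_on with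
  | _ n ih =>
    intro x z hn
    by_cases hxz : x = z
    · subst hxz; rw [h1, zeta_self]
    by_cases hle : x ≤ z
    swap
    · rw [h2 x z hle, zeta_not_le hle]
    have hlt : x < z := lt_of_le_of_ne hle hxz
    rcases Nat.even_or_odd (ρ z - ρ x) with hpar | hpar
    · rw [even_formula ρ hρ ζ h1 h4 x z hlt hpar,
        zeta_even hlt (by rw [Nat.odd_iff] ; rw [Nat.even_iff] at hpar; omega)]
      congr 1
      refine Finset.sum_congr rfl fun y hy => ?_
      obtain ⟨hy1, hy2⟩ := mem_Iset.mp hy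
      have e1 := hρ hy1
      have e2 := hρ hy2
      have e3 := hρ hlt
      rw [ih (ρ y - ρ x) (by omega) x y le_rfl,
        ih (ρ z - ρ y) (by omega) y z le_rfl]
    · rw [h3 x z hlt hpar, zeta_odd hlt hpar]

end EulerianExtAux

/-- odd values of `ζ̄` may be chosen arbitrarily; there is a unique
extension to even rank differences, given by the stated formula, making
`(P,ρ,ζ̄)` an Eulerian quasi-graded poset. -/
theorem eulerian_extension_of_odd_values {α : Type*} [Fintype α] [PartialOrder α]
    (ρ : α → ℕ) (hρ : StrictMono ρ) (ζodd : α → α → ℚ) :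
    (∃! ζ : α → α → ℚ,
      (∀ x, ζ x x = 1) ∧ (∀ x y : α, ¬ x ≤ y → ζ x y = 0) ∧
      (∀ x y : α, x < y → Odd (ρ y - ρ x) → ζ x y = ζodd x y) ∧
      IsEulerian ρ ζ) ∧
    (∀ ζ : α → α → ℚ,
      (∀ x, ζ x x = 1) → (∀ x y : α, ¬ x ≤ y → ζ x y = 0) →
      (∀ x y : α, x < y → Odd (ρ y - ρ x) → ζ x y = ζodd x y) →
      IsEulerian ρ ζ →
      ∀ x z : α, x < z → Even (ρ z - ρ x) →
        ζ x z = -(1/2) * ∑ y ∈ Finset.univ.filter (fun y => x < y ∧ y < z),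
          (-1 : ℚ) ^ (ρ y - ρ x) * ζ x y * ζ y z) := by
  classical
  constructor
  · refine ⟨EulerianExtAux.zeta ρ hρ ζodd, ⟨?_, ?_, ?_, ?_⟩, ?_⟩
    · exact fun x => EulerianExtAux.zeta_self x
    · exact fun x y h => EulerianExtAux.zeta_not_le h
    · exact fun x y h ho => EulerianExtAux.zeta_odd h ho
    · intro x z hxz
      unfold EulerianAt iaDelta
      exact (EulerianExtAux.main_aux ρ hρ ζodd (ρ z - ρ x) x z hxz le_rfl).1
    · rintro ζ ⟨p1, p2, p3, p4⟩
      funext x z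
      exact EulerianExtAux.unique_aux ρ hρ ζodd ζ p1 p2 p3 p4 (ρ z - ρ x) x z le_rfl
  · intro ζ h1 h2 h3 h4 x z hlt hev
    exact EulerianExtAux.even_formula ρ hρ ζ h1 h4 x z hlt hev
end
end

section
/- Let (P,ρ,ζ̄) be a quasi-graded poset with minimal element 0̂ and maximal element 1̂ of odd rank n (i.e., ρ(1̂) − ρ(0̂) = n is odd), such that every proper interval [x,y] ⊊ [0̂,1̂] is Eulerian. Then (P,ρ,ζ̄) is an Eulerian quasi-graded poset. -/
open scoped Classical
open Finset

noncomputable section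

variable {α : Type*}

lemma negpow_sub' {k m : ℕ} (h : k ≤ m) : ((-1:ℚ))^(m-k) = (-1)^m * (-1)^k := by
  rw [← pow_add, show m + k = (m - k) + 2 * k from by omega, pow_add, pow_mul,
    neg_one_sq, one_pow, mul_one]

/-- a quasi-graded poset with `0̂` and `1̂` of odd rank all of whose
proper intervals are Eulerian is itself Eulerian. -/
theorem eulerian_of_proper_intervals_odd_rank {α : Type*} [Fintype α] [PartialOrder α]
    [BoundedOrder α] (ρ : α → ℕ) (ζ : α → α → ℚ) (hq : IsQuasiGraded ρ ζ)
    (n : ℕ) (hn : ρ (⊤ : α) - ρ (⊥ : α) = n) (hodd : Odd n)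
    (hproper : ∀ x z : α, x ≤ z → ¬(x = ⊥ ∧ z = ⊤) → EulerianAt ρ ζ x z) :
    IsEulerian ρ ζ := by
  obtain ⟨hmono, hdiag, hnle⟩ := hq
  have hbot : ∀ y : α, ρ (⊥:α) ≤ ρ y := fun y => hmono.monotone bot_le
  have hne : (⊥ : α) ≠ ⊤ := by
    intro h
    have h0 : n = 0 := by rw [← hn, ← h]; omega
    simp [h0] at hodd
  intro x z hxz
  by_cases hcase : x = ⊥ ∧ z = ⊤
  · obtain ⟨rfl, rfl⟩ := hcase
    unfold EulerianAt
    rw [Finset.filter_true_of_mem (fun y _ => ⟨bot_le, le_top⟩)]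
    have hdelta : iaDelta (⊥:α) (⊤:α) = 0 := by simp [iaDelta, hne]
    rw [hdelta]
    set S : ℚ := ∑ y : α, (-1:ℚ)^(ρ y - ρ (⊥:α)) * ζ ⊥ y * ζ y ⊤ with hS
    -- the one-sided Euler condition on proper intervals, extended to sums over univ
    have hE : ∀ y : α, y ≠ ⊥ →
        (∑ u : α, (-1:ℚ)^(ρ u - ρ y) * ζ y u * ζ u ⊤) = (if y = ⊤ then 1 else 0) := by
      intro y hy
      have h := hproper y ⊤ le_top (fun h => hy h.1)
      unfold EulerianAt iaDelta at h
      rw [← h, Finset.sum_filter]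
      refine Finset.sum_congr rfl fun u _ => ?_
      by_cases hyu : y ≤ u
      · simp [hyu, le_top]
      · simp [hyu, hnle _ _ hyu]
    have hG : ∀ u : α, u ≠ ⊤ →
        (∑ y : α, (-1:ℚ)^(ρ y - ρ (⊥:α)) * ζ ⊥ y * ζ y u) = (if (⊥:α) = u then 1 else 0) := by
      intro u hu
      have h := hproper ⊥ u bot_le (fun h => hu h.2)
      unfold EulerianAt iaDelta at h
      rw [← h, Finset.sum_filter]
      refine Finset.sum_congr rfl fun y _ => ?_
      by_cases hyu : y ≤ u
      · simp [hyu, bot_le]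
      · simp [hyu, hnle _ _ hyu, bot_le]
    -- the double sum W, computed in two ways
    have hW1 : (∑ y : α, ∑ u : α, (-1:ℚ)^(ρ u - ρ y) * ζ ⊥ y * ζ y u * ζ u ⊤)
        = S + ζ ⊥ ⊤ := by
      have step : ∀ y : α, (∑ u : α, (-1:ℚ)^(ρ u - ρ y) * ζ ⊥ y * ζ y u * ζ u ⊤)
          = ζ ⊥ y * ∑ u : α, (-1:ℚ)^(ρ u - ρ y) * ζ y u * ζ u ⊤ := by
        intro y
        rw [Finset.mul_sum]
        exact Finset.sum_congr rfl fun u _ => by ring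
      simp only [step]
      rw [← Finset.add_sum_erase _ _ (Finset.mem_univ (⊥:α))]
      have h1 : ζ (⊥:α) ⊥ * (∑ u : α, (-1:ℚ)^(ρ u - ρ (⊥:α)) * ζ ⊥ u * ζ u ⊤) = S := by
        rw [hdiag, one_mul, hS]
      have h2 : (∑ y ∈ Finset.univ.erase (⊥:α),
          ζ (⊥:α) y * ∑ u : α, (-1:ℚ)^(ρ u - ρ y) * ζ y u * ζ u ⊤) = ζ ⊥ ⊤ := by
        rw [Finset.sum_congr rfl (fun y hy => by
          rw [hE y (Finset.ne_of_mem_erase hy), mul_ite, mul_one, mul_zero])]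
        rw [Finset.sum_ite_eq']
        simp [Finset.mem_erase, Ne.symm hne]
      rw [h1, h2]
    have key : ∀ y u : α, (-1:ℚ)^(ρ u - ρ y) * ζ ⊥ y * ζ y u * ζ u ⊤
        = (-1:ℚ)^(ρ u - ρ (⊥:α)) * ((-1:ℚ)^(ρ y - ρ (⊥:α)) * ζ ⊥ y * ζ y u) * ζ u ⊤ := by
      intro y u
      by_cases hyu : y ≤ u
      · have h2 : ρ y ≤ ρ u := hmono.monotone hyu
        have h1 := hbot y
        have h3 : ρ u - ρ y = (ρ u - ρ ⊥) - (ρ y - ρ ⊥) := by omega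
        rw [h3, negpow_sub' (by omega)]
        ring
      · rw [hnle _ _ hyu]; ring
    have hW2 : (∑ y : α, ∑ u : α, (-1:ℚ)^(ρ u - ρ y) * ζ ⊥ y * ζ y u * ζ u ⊤)
        = ζ ⊥ ⊤ - S := by
      rw [Finset.sum_comm]
      simp only [key]
      have step : ∀ u : α, (∑ y : α,
          (-1:ℚ)^(ρ u - ρ (⊥:α)) * ((-1:ℚ)^(ρ y - ρ (⊥:α)) * ζ ⊥ y * ζ y u) * ζ u ⊤)
          = (-1:ℚ)^(ρ u - ρ (⊥:α)) * (∑ y : α, (-1:ℚ)^(ρ y - ρ (⊥:α)) * ζ ⊥ y * ζ y u) * ζ u ⊤ := by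
        intro u
        rw [Finset.mul_sum, Finset.sum_mul]
      simp only [step]
      rw [← Finset.add_sum_erase _ _ (Finset.mem_univ (⊤:α))]
      have h1 : (-1:ℚ)^(ρ (⊤:α) - ρ (⊥:α)) *
          (∑ y : α, (-1:ℚ)^(ρ y - ρ (⊥:α)) * ζ ⊥ y * ζ y ⊤) * ζ (⊤:α) ⊤ = -S := by
        rw [hdiag, mul_one, hn, hodd.neg_one_pow, ← hS]
        ring
      have h2 : (∑ u ∈ Finset.univ.erase (⊤:α),
          (-1:ℚ)^(ρ u - ρ (⊥:α)) * (∑ y : α, (-1:ℚ)^(ρ y - ρ (⊥:α)) * ζ ⊥ y * ζ y u) * ζ u ⊤)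
          = ζ ⊥ ⊤ := by
        rw [Finset.sum_congr rfl (fun u hu => by
          rw [hG u (Finset.ne_of_mem_erase hu), mul_ite, mul_one, mul_zero, ite_mul, zero_mul])]
        rw [Finset.sum_ite_eq]
        simp [Finset.mem_erase, hne]
      rw [h1, h2]
      ring
    have : S + ζ (⊥:α) ⊤ = ζ (⊥:α) ⊤ - S := hW1 ▸ hW2
    linarith
  · exact hproper x z hxz hcase
end
end

section
/- Let P be a finite poset with 0̂ and 1̂, let y be an element with 0̂ < y < 1̂, and let Q = P − {y} be the induced subposet. If f is in the incidence algebra of P with f(x,x) = 1 for all x, then (f|_Q)^{-1}(0̂,1̂) = f^{-1}(0̂,1̂) − f^{-1}(0̂,y)·f^{-1}(y,1̂), where f|_Q denotes the restriction of f to intervals of Q and the inverses are taken in the incidence algebras of Q and P respectively. -/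
open scoped Classical
open Finset

noncomputable section

variable {α : Type*}

section Helpers

variable [Fintype α] [PartialOrder α]

lemma iaMul_assoc (a b c : α → α → ℚ) :
    iaMul (iaMul a b) c = iaMul a (iaMul b c) := by
  funext x z
  unfold iaMul
  simp only [Finset.sum_filter]
  trans (∑ u : α, ∑ v : α,
    if (x ≤ v ∧ v ≤ u) ∧ x ≤ u ∧ u ≤ z then a x v * b v u * c u z else 0)
  · refine Finset.sum_congr rfl fun u _ => ?_
    split_ifs with h
    · rw [Finset.sum_mul]
      refine Finset.sum_congr rfl fun v _ => ?_
      by_cases h2 : x ≤ v ∧ v ≤ u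
      · rw [if_pos h2, if_pos ⟨h2, h⟩]
      · rw [if_neg h2, zero_mul, if_neg (fun hc => h2 hc.1)]
    · rw [eq_comm, Finset.sum_eq_zero]
      intro v _; rw [if_neg (fun hc => h hc.2)]
  · rw [Finset.sum_comm]
    refine Finset.sum_congr rfl fun v _ => ?_
    split_ifs with h
    · rw [Finset.mul_sum]
      refine Finset.sum_congr rfl fun u _ => ?_
      by_cases h2 : v ≤ u ∧ u ≤ z
      · rw [if_pos ⟨⟨h.1, h2.1⟩, h.1.trans h2.1, h2.2⟩, if_pos h2, mul_assoc]
      · rw [if_neg (fun hc => h2 ⟨hc.1.2, hc.2.2⟩), if_neg h2, mul_zero]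
    · rw [Finset.sum_eq_zero]
      intro u _; rw [if_neg (fun hc => h ⟨hc.1.1, hc.1.2.trans hc.2.2⟩)]

lemma iaMul_delta_left (b : α → α → ℚ) {x z : α} (h : x ≤ z) :
    iaMul iaDelta b x z = b x z := by
  unfold iaMul iaDelta
  rw [Finset.sum_eq_single_of_mem x (by simp [h])]
  · simp
  · intro u _ hne
    rw [if_neg (fun hh => hne hh.symm), zero_mul]

lemma iaMul_delta_right (b : α → α → ℚ) {x z : α} (h : x ≤ z) :
    iaMul b iaDelta x z = b x z := by
  unfold iaMul iaDelta
  rw [Finset.sum_eq_single_of_mem z (by simp [h])]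
  · simp
  · intro u _ hne
    rw [if_neg hne, mul_zero]

lemma inverse_unique (a b c : α → α → ℚ) (h1 : iaMul a b = iaDelta)
    (h2 : iaMul c a = iaDelta) {x z : α} (h : x ≤ z) : b x z = c x z := by
  calc b x z = iaMul iaDelta b x z := (iaMul_delta_left b h).symm
    _ = iaMul (iaMul c a) b x z := by rw [h2]
    _ = iaMul c (iaMul a b) x z := by rw [iaMul_assoc]
    _ = iaMul c iaDelta x z := by rw [h1]
    _ = c x z := iaMul_delta_right c h

omit [PartialOrder α] in
lemma split_y (y : α) (P : α → Prop) [DecidablePred P] (v : α → ℚ) :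
    (∑ u, if P u then v u else 0)
      = (∑ u, if P u ∧ u ≠ y then v u else 0) + (if P y then v y else 0) := by
  have key : ∀ u, (if P u then v u else 0)
      = (if P u ∧ u ≠ y then v u else 0)
        + (if u = y then (if P u then v u else 0) else 0) := by
    intro u
    by_cases h : u = y <;> by_cases hp : P u <;> simp [h, hp]
  rw [Finset.sum_congr rfl (fun u _ => key u), Finset.sum_add_distrib,
    Finset.sum_ite_eq' Finset.univ y _]
  simp

omit [PartialOrder α] in
lemma subtype_sum (y : α) (F : α → ℚ) :
    (∑ u : {u : α // u ≠ y}, F u.1) = ∑ u : α, if u ≠ y then F u else 0 := by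
  rw [← Finset.sum_filter]
  exact (Finset.sum_subtype (Finset.univ.filter (· ≠ y)) (fun u => by simp) F).symm

/-- Key step: the candidate `h(u,v) = g(u,v) - g(u,y) g(y,v)` is a right inverse
of `f` restricted to `Q = α - {y}`, provided `g` vanishes off intervals. -/
lemma key_right_inverse (f g : α → α → ℚ) (hf : ∀ x, f x x = 1) (y : α)
    (hg₁ : iaMul f g = iaDelta) (hg0 : ∀ u v : α, ¬ u ≤ v → g u v = 0) :
    iaMul (fun u v : {u : α // u ≠ y} => f u.1 v.1)
      (fun u v : {u : α // u ≠ y} => g u.1 v.1 - g u.1 y * g y v.1) = iaDelta := by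
  have gyy : g y y = 1 := by
    have h := congrFun (congrFun hg₁ y) y
    unfold iaMul iaDelta at h
    rw [Finset.sum_eq_single_of_mem y (by simp)] at h
    · rw [hf, one_mul] at h; simpa using h
    · intro u hu hne
      simp only [Finset.mem_filter, Finset.mem_univ, true_and] at hu
      exact absurd (le_antisymm hu.2 hu.1) hne
  funext x z
  have hδ : ∀ x' z' : α, iaMul f g x' z'
      = ∑ u, if x' ≤ u ∧ u ≤ z' then f x' u * g u z' else 0 := by
    intro x' z'; unfold iaMul; rw [Finset.sum_filter]
  -- convert the subtype sum to a sum over α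
  have hsum : iaMul (fun u v : {u : α // u ≠ y} => f u.1 v.1)
      (fun u v : {u : α // u ≠ y} => g u.1 v.1 - g u.1 y * g y v.1) x z
      = ∑ u, if (x.1 ≤ u ∧ u ≤ z.1) ∧ u ≠ y
          then f x.1 u * (g u z.1 - g u y * g y z.1) else 0 := by
    unfold iaMul
    rw [Finset.sum_filter]
    have e1 : (∑ u : {u : α // u ≠ y}, if x ≤ u ∧ u ≤ z
          then (fun u v : {u : α // u ≠ y} => f u.1 v.1) x u
            * (fun u v : {u : α // u ≠ y} => g u.1 v.1 - g u.1 y * g y v.1) u z else 0)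
        = ∑ u : {u : α // u ≠ y}, (fun w : α =>
            if x.1 ≤ w ∧ w ≤ z.1 then f x.1 w * (g w z.1 - g w y * g y z.1) else 0) u.1 := by
      refine Finset.sum_congr rfl fun u _ => ?_
      simp [Subtype.coe_le_coe]
    have e2 := subtype_sum y (fun w : α =>
      if x.1 ≤ w ∧ w ≤ z.1 then f x.1 w * (g w z.1 - g w y * g y z.1) else 0)
    refine e1.trans (e2.trans ?_)
    refine Finset.sum_congr rfl fun u _ => ?_
    by_cases hne : u = y <;> by_cases hc : x.1 ≤ u ∧ u ≤ z.1 <;> simp [hne, hc]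
  rw [hsum]
  have hA : (∑ u : α, if x.1 ≤ u ∧ u ≤ z.1 then f x.1 u * g u z.1 else 0)
      = (∑ u : α, if (x.1 ≤ u ∧ u ≤ z.1) ∧ u ≠ y then f x.1 u * g u z.1 else 0)
        + (if x.1 ≤ y ∧ y ≤ z.1 then f x.1 y * g y z.1 else 0) :=
    split_y y _ _
  rw [← hδ x.1 z.1, hg₁] at hA
  have expand : ∀ u : α, (if (x.1 ≤ u ∧ u ≤ z.1) ∧ u ≠ y
        then f x.1 u * (g u z.1 - g u y * g y z.1) else 0)
      = (if (x.1 ≤ u ∧ u ≤ z.1) ∧ u ≠ y then f x.1 u * g u z.1 else 0)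
        - (if (x.1 ≤ u ∧ u ≤ z.1) ∧ u ≠ y then f x.1 u * g u y else 0) * g y z.1 := by
    intro u; split_ifs <;> ring
  rw [Finset.sum_congr rfl (fun u _ => expand u), Finset.sum_sub_distrib,
    ← Finset.sum_mul]
  have hδQ : (iaDelta x z : ℚ) = iaDelta x.1 z.1 := by
    unfold iaDelta
    by_cases h : x = z
    · simp [h]
    · rw [if_neg h, if_neg (fun hh => h (Subtype.ext hh))]
  rw [hδQ]
  by_cases hyz : y ≤ z.1
  · by_cases hxy : x.1 ≤ y
    · -- main case: x ≤ y ≤ z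
      have hB : (∑ u : α, if (x.1 ≤ u ∧ u ≤ z.1) ∧ u ≠ y then f x.1 u * g u y else 0)
          = - f x.1 y := by
        have step : ∀ u : α, (if (x.1 ≤ u ∧ u ≤ z.1) ∧ u ≠ y then f x.1 u * g u y else 0)
            = (if (x.1 ≤ u ∧ u ≤ y) ∧ u ≠ y then f x.1 u * g u y else 0) := by
          intro u
          by_cases h1 : (x.1 ≤ u ∧ u ≤ z.1) ∧ u ≠ y <;>
            by_cases h2 : (x.1 ≤ u ∧ u ≤ y) ∧ u ≠ y
          · rw [if_pos h1, if_pos h2]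
          · rw [if_pos h1, if_neg h2]
            have hny : ¬ u ≤ y := fun hh => h2 ⟨⟨h1.1.1, hh⟩, h1.2⟩
            rw [hg0 u y hny, mul_zero]
          · exact absurd ⟨⟨h2.1.1, le_trans h2.1.2 hyz⟩, h2.2⟩ h1
          · rw [if_neg h1, if_neg h2]
        rw [Finset.sum_congr rfl (fun u _ => step u)]
        have hB2 : (∑ u : α, if x.1 ≤ u ∧ u ≤ y then f x.1 u * g u y else 0)
            = (∑ u : α, if (x.1 ≤ u ∧ u ≤ y) ∧ u ≠ y then f x.1 u * g u y else 0)
              + (if x.1 ≤ y ∧ y ≤ y then f x.1 y * g y y else 0) :=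
          split_y y _ _
        rw [← hδ x.1 y, hg₁] at hB2
        have hd0 : (iaDelta x.1 y : ℚ) = 0 := by
          unfold iaDelta; rw [if_neg x.2]
        rw [hd0] at hB2
        rw [eq_sub_of_add_eq hB2.symm, if_pos ⟨hxy, le_refl y⟩, gyy, mul_one]
        ring
      rw [hB, eq_sub_of_add_eq hA.symm, if_pos ⟨hxy, hyz⟩]
      ring
    · -- x ≰ y : the correction terms vanish
      have hB : (∑ u : α, if (x.1 ≤ u ∧ u ≤ z.1) ∧ u ≠ y then f x.1 u * g u y else 0)
          = 0 := by
        refine Finset.sum_eq_zero fun u _ => ?_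
        split_ifs with h
        · rw [hg0 u y (fun hh => hxy (le_trans h.1.1 hh)), mul_zero]
        · rfl
      rw [hB, eq_sub_of_add_eq hA.symm, if_neg (fun hh => hxy hh.1)]
      ring
  · -- y ≰ z : g y z = 0
    rw [hg0 y z.1 hyz, mul_zero, eq_sub_of_add_eq hA.symm,
      if_neg (fun hh => hyz hh.2)]
    ring

end Helpers

/-- removing an element `y` with `0̂ < y < 1̂`:
`(f|_Q)⁻¹(0̂,1̂) = f⁻¹(0̂,1̂) - f⁻¹(0̂,y)·f⁻¹(y,1̂)`. -/
theorem inverse_delete_element {α : Type*} [Fintype α] [PartialOrder α] [BoundedOrder α]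
    (f : α → α → ℚ) (hf : ∀ x, f x x = 1)
    (y : α) (hy₁ : (⊥ : α) < y) (hy₂ : y < (⊤ : α))
    (g : α → α → ℚ) (hg₁ : iaMul f g = iaDelta) (hg₂ : iaMul g f = iaDelta)
    (gQ : {u : α // u ≠ y} → {u : α // u ≠ y} → ℚ)
    (hgQ₁ : iaMul (fun u v : {u : α // u ≠ y} => f u.1 v.1) gQ = iaDelta)
    (hgQ₂ : iaMul gQ (fun u v : {u : α // u ≠ y} => f u.1 v.1) = iaDelta) :
    gQ ⟨⊥, ne_of_lt hy₁⟩ ⟨⊤, (ne_of_lt hy₂).symm⟩ =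
      g ⊥ ⊤ - g ⊥ y * g y ⊤ := by
  -- truncate g off intervals
  set g' : α → α → ℚ := fun u v => if u ≤ v then g u v else 0 with hg'def
  have hg0 : ∀ u v : α, ¬ u ≤ v → g' u v = 0 := by
    intro u v h; simp [hg'def, h]
  have hg'eq : ∀ u v : α, u ≤ v → g' u v = g u v := by
    intro u v h; simp [hg'def, h]
  have hg₁' : iaMul f g' = iaDelta := by
    rw [← hg₁]; funext x z; unfold iaMul
    refine Finset.sum_congr rfl fun u hu => ?_
    simp only [Finset.mem_filter, Finset.mem_univ, true_and] at hu
    rw [hg'eq u z hu.2]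
  have key := key_right_inverse f g' hf y hg₁' hg0
  have hbotQ : (⟨⊥, ne_of_lt hy₁⟩ : {u : α // u ≠ y}) ≤ ⟨⊤, (ne_of_lt hy₂).symm⟩ := by
    simp [Subtype.mk_le_mk]
  have := inverse_unique (fun u v : {u : α // u ≠ y} => f u.1 v.1)
    (fun u v : {u : α // u ≠ y} => g' u.1 v.1 - g' u.1 y * g' y v.1) gQ key hgQ₂ hbotQ
  rw [← this]
  simp only
  rw [hg'eq ⊥ ⊤ bot_le, hg'eq ⊥ y (le_of_lt hy₁), hg'eq y ⊤ (le_of_lt hy₂)]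
end
end

section
/- Let (P,ρ,ζ̄) be an Eulerian quasi-graded poset of rank n+1 with 0̂ and 1̂ and ρ(0̂)=0. Then the flag h̄-vector satisfies h̄_S = h̄_{S̄} for every subset S ⊆ {1,…,n}, where S̄ = {1,…,n} − S. -/
open scoped Classical
open Finset

noncomputable section

variable {α : Type*}

namespace EGR7
set_option linter.unusedSectionVars false

variable {α : Type*} [Fintype α] [PartialOrder α] [BoundedOrder α]

/-- Recursive rank-selected flag sum: sum over chains from `x` to `⊤` with
prescribed interior rank list. -/
def fbar (ρ : α → ℕ) (ζ : α → α → ℚ) : α → List ℕ → ℚ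
  | x, [] => ζ x ⊤
  | x, s :: L => ∑ y ∈ Finset.univ.filter (fun y => ρ y = s), ζ x y * fbar ρ ζ y L

variable (ρ : α → ℕ) (ζ : α → α → ℚ)

lemma fbar_nil (x : α) : fbar ρ ζ x [] = ζ x ⊤ := rfl

lemma fbar_cons (x : α) (s : ℕ) (L : List ℕ) :
    fbar ρ ζ x (s :: L) = ∑ y ∈ Finset.univ.filter (fun y => ρ y = s),
      ζ x y * fbar ρ ζ y L := rfl

lemma neg_one_pow_self_mul (b : ℕ) : (-1 : ℚ) ^ b * (-1) ^ b = 1 := by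
  rw [← pow_add, ← two_mul, pow_mul]; norm_num

lemma neg_one_pow_sub {a b : ℕ} (h : b ≤ a) :
    (-1 : ℚ) ^ (a - b) = (-1) ^ a * (-1) ^ b := by
  obtain ⟨c, rfl⟩ := Nat.exists_eq_add_of_le h
  rw [Nat.add_sub_cancel_left, pow_add]
  have h2 : ((-1 : ℚ) ^ b) * ((-1) ^ b) = 1 := by
    rw [← pow_add, ← two_mul, pow_mul]; norm_num
  calc (-1 : ℚ) ^ c = ((-1 : ℚ) ^ b * (-1) ^ b) * (-1) ^ c := by rw [h2, one_mul]
    _ = (-1 : ℚ) ^ b * (-1) ^ c * (-1) ^ b := by ring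

lemma rho_mono (hq : IsQuasiGraded ρ ζ) {x y : α} (h : x ≤ y) : ρ x ≤ ρ y :=
  hq.1.monotone h

lemma rho_inj (hq : IsQuasiGraded ρ ζ) {x y : α} (h : x ≤ y) (hr : ρ x = ρ y) : x = y := by
  rcases lt_or_eq_of_le h with h' | h'
  · exact absurd hr (ne_of_lt (hq.1 h'))
  · exact h'

/-- The key "one gap" consequence of the Eulerian condition. -/
lemma bracket (hq : IsQuasiGraded ρ ζ) (hE : IsEulerian ρ ζ) {x z : α} (h : ρ x < ρ z) :
    ∑ m ∈ Finset.Ioo (ρ x) (ρ z),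
      (-1 : ℚ) ^ m * ∑ y ∈ Finset.univ.filter (fun y => ρ y = m), ζ x y * ζ y z
      = -((-1) ^ (ρ x) + (-1) ^ (ρ z)) * ζ x z := by
  obtain ⟨hmono, hrefl, hzero⟩ := hq
  have hxz_ne : x ≠ z := fun hxx => absurd (congrArg ρ hxx) (ne_of_lt h)
  by_cases hxz : x ≤ z
  · -- main case
    have hE' := hE x z hxz
    unfold EulerianAt iaDelta at hE'
    rw [if_neg hxz_ne] at hE'
    -- replace (-1)^(ρ y - ρ x) by (-1)^(ρ y)*(-1)^(ρ x)
    have h2 : ∑ y ∈ Finset.univ.filter (fun y => x ≤ y ∧ y ≤ z),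
        (-1 : ℚ) ^ (ρ y) * (ζ x y * ζ y z) = 0 := by
      have : ∑ y ∈ Finset.univ.filter (fun y => x ≤ y ∧ y ≤ z),
          (-1 : ℚ) ^ (ρ y) * (ζ x y * ζ y z)
          = (-1 : ℚ) ^ (ρ x) * ∑ y ∈ Finset.univ.filter (fun y => x ≤ y ∧ y ≤ z),
            (-1 : ℚ) ^ (ρ y - ρ x) * ζ x y * ζ y z := by
        rw [Finset.mul_sum]
        refine Finset.sum_congr rfl fun y hy => ?_
        have hxy : x ≤ y := (Finset.mem_filter.1 hy).2.1
        have hle : ρ x ≤ ρ y := hmono.monotone hxy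
        rw [neg_one_pow_sub hle]
        rw [show ((-1 : ℚ) ^ (ρ x) * ((-1) ^ (ρ y) * (-1) ^ (ρ x) * ζ x y * ζ y z))
          = ((-1 : ℚ) ^ (ρ x) * (-1) ^ (ρ x)) * ((-1) ^ (ρ y) * (ζ x y * ζ y z)) from by ring,
          neg_one_pow_self_mul, one_mul]
      rw [this, hE', mul_zero]
    -- extend to univ
    have h3 : ∑ y ∈ Finset.univ, (-1 : ℚ) ^ (ρ y) * (ζ x y * ζ y z) = 0 := by
      rw [← Finset.sum_filter_add_sum_filter_not Finset.univ (fun y => x ≤ y ∧ y ≤ z)]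
      rw [h2, zero_add]
      refine Finset.sum_eq_zero fun y hy => ?_
      have hy' := (Finset.mem_filter.1 hy).2
      rcases not_and_or.mp hy' with hn | hn
      · rw [hzero _ _ hn]; ring
      · rw [hzero _ _ hn]; ring
    -- group by rank
    have h4 : ∑ m ∈ Finset.Ioo (ρ x) (ρ z),
        ∑ y ∈ Finset.univ.filter (fun y => ρ y = m), (-1 : ℚ) ^ (ρ y) * (ζ x y * ζ y z)
        = ∑ y ∈ Finset.univ.filter (fun y => ρ y ∈ Finset.Ioo (ρ x) (ρ z)),
          (-1 : ℚ) ^ (ρ y) * (ζ x y * ζ y z) := by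
      rw [← Finset.sum_fiberwise_of_maps_to (g := ρ)
        (t := Finset.Ioo (ρ x) (ρ z)) (fun y hy => (Finset.mem_filter.1 hy).2)]
      refine Finset.sum_congr rfl fun m hm => ?_
      rw [Finset.mem_Ioo] at hm
      refine Finset.sum_congr ?_ fun _ _ => rfl
      ext y
      simp only [Finset.mem_filter, Finset.mem_univ, true_and, Finset.mem_Ioo]
      constructor
      · intro hy; exact ⟨by omega, hy⟩
      · intro hy; exact hy.2
    -- the complementary part is the two endpoint terms
    have h5 : ∑ y ∈ Finset.univ.filter (fun y => ¬ (ρ y ∈ Finset.Ioo (ρ x) (ρ z))),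
        (-1 : ℚ) ^ (ρ y) * (ζ x y * ζ y z)
        = (-1 : ℚ) ^ (ρ x) * ζ x z + (-1 : ℚ) ^ (ρ z) * ζ x z := by
      have hsub : ({x, z} : Finset α) ⊆
          Finset.univ.filter (fun y => ¬ (ρ y ∈ Finset.Ioo (ρ x) (ρ z))) := by
        intro y hy
        simp only [Finset.mem_insert, Finset.mem_singleton] at hy
        simp only [Finset.mem_filter, Finset.mem_univ, true_and, Finset.mem_Ioo]
        rcases hy with rfl | rfl
        · omega
        · omega
      rw [← Finset.sum_subset hsub ?_]
      · rw [Finset.sum_pair hxz_ne, hrefl x, hrefl z]; ring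
      · intro y hy hny
        simp only [Finset.mem_insert, Finset.mem_singleton, not_or] at hny
        simp only [Finset.mem_filter, Finset.mem_univ, true_and, Finset.mem_Ioo] at hy
        by_cases hxy : x ≤ y
        · by_cases hyz : y ≤ z
          · have h1 : ρ x ≤ ρ y := hmono.monotone hxy
            have h2' : ρ y ≤ ρ z := hmono.monotone hyz
            have : ρ x = ρ y ∨ ρ y = ρ z := by omega
            rcases this with he | he
            · exact absurd (rho_inj ρ ζ ⟨hmono, hrefl, hzero⟩ hxy he).symm hny.1
            · rw [hzero y z ?_]
              · ring
              · intro hyz'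
                exact hny.2 (rho_inj ρ ζ ⟨hmono, hrefl, hzero⟩ hyz' he)
          · rw [hzero _ _ hyz]; ring
        · rw [hzero _ _ hxy]; ring
    -- combine
    have h6 : ∑ y ∈ Finset.univ.filter (fun y => ρ y ∈ Finset.Ioo (ρ x) (ρ z)),
        (-1 : ℚ) ^ (ρ y) * (ζ x y * ζ y z)
        = -((-1) ^ (ρ x) + (-1) ^ (ρ z)) * ζ x z := by
      have := Finset.sum_filter_add_sum_filter_not Finset.univ
        (fun y => ρ y ∈ Finset.Ioo (ρ x) (ρ z))
        (fun y => (-1 : ℚ) ^ (ρ y) * (ζ x y * ζ y z))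
      rw [h3] at this
      rw [h5] at this
      linarith
    rw [← h6, ← h4]
    refine Finset.sum_congr rfl fun m hm => ?_
    rw [Finset.mul_sum]
    refine Finset.sum_congr rfl fun y hy => ?_
    have : ρ y = m := (Finset.mem_filter.1 hy).2
    rw [this]
  · -- degenerate case: x and z incomparable
    rw [hzero _ _ hxz]
    rw [Finset.sum_eq_zero, mul_zero]
    intro m _
    rw [Finset.sum_eq_zero, mul_zero]
    intro y _
    by_cases hxy : x ≤ y
    · by_cases hyz : y ≤ z
      · exact absurd (le_trans hxy hyz) hxz
      · rw [hzero _ _ hyz, mul_zero]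
    · rw [hzero _ _ hxy, zero_mul]

/-- Decomposition of the sum over supersets of `S` inside `Icc a n` according to the
minimum element. Here `b = min S` when `S` is nonempty, and `b = n` when `S = ∅`. -/
lemma decomp (a n b : ℕ) (S : Finset ℕ) (hS : S ⊆ Finset.Icc a n)
    (hb : (S = ∅ ∧ b = n) ∨ (b ∈ S ∧ ∀ s ∈ S, b ≤ s))
    (F : Finset ℕ → ℚ) :
    ∑ T ∈ (Finset.Icc a n).powerset.filter (S ⊆ ·), F T
      = (if S = ∅ then F ∅ else 0)
        + ∑ m ∈ Finset.Icc a b,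
            ∑ T ∈ (Finset.Icc (m+1) n).powerset.filter ((S.erase m) ⊆ ·),
              F (insert m T) := by
  classical
  have hbn : b ≤ n := by
    rcases hb with ⟨_, rfl⟩ | ⟨hbS, _⟩
    · exact le_rfl
    · exact (Finset.mem_Icc.1 (hS hbS)).2
  set P := (Finset.Icc a n).powerset.filter (S ⊆ ·) with hP
  set φ : Finset ℕ → ℕ := fun T => if h : T.Nonempty then T.min' h else 0 with hφ
  have hsplit := Finset.sum_filter_add_sum_filter_not P (· = ∅) F
  rw [← hsplit]
  congr 1
  · -- empty part
    by_cases h : S = ∅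
    · rw [if_pos h]
      have : P.filter (· = ∅) = {∅} := by
        ext T
        simp only [hP, Finset.mem_filter, Finset.mem_powerset, Finset.mem_singleton]
        constructor
        · intro hT; exact hT.2
        · intro hT; subst hT; exact ⟨⟨Finset.empty_subset _, h ▸ Finset.Subset.refl _⟩, rfl⟩
      rw [this, Finset.sum_singleton]
    · rw [if_neg h]
      have : P.filter (· = ∅) = ∅ := by
        ext T
        simp only [hP, Finset.mem_filter, Finset.mem_powerset, Finset.notMem_empty, iff_false]
        rintro ⟨⟨_, hST⟩, rfl⟩
        exact h (Finset.subset_empty.1 hST)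
      rw [this, Finset.sum_empty]
  · -- nonempty part
    have hmap : ∀ T ∈ P.filter (· ≠ ∅), φ T ∈ Finset.Icc a b := by
      intro T hT
      simp only [hP, Finset.mem_filter, Finset.mem_powerset] at hT
      obtain ⟨⟨hTIcc, hST⟩, hTne⟩ := hT
      have hne : T.Nonempty := Finset.nonempty_iff_ne_empty.2 hTne
      rw [hφ]; simp only [dif_pos hne]
      have hmem := T.min'_mem hne
      have h1 : a ≤ T.min' hne := (Finset.mem_Icc.1 (hTIcc hmem)).1
      have h2 : T.min' hne ≤ b := by
        rcases hb with ⟨hSe, rfl⟩ | ⟨hbS, _⟩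
        · exact (Finset.mem_Icc.1 (hTIcc hmem)).2
        · exact T.min'_le b (hST hbS)
      exact Finset.mem_Icc.2 ⟨h1, h2⟩
    rw [← Finset.sum_fiberwise_of_maps_to hmap F]
    refine Finset.sum_congr rfl fun m hm => ?_
    rw [Finset.mem_Icc] at hm
    refine Finset.sum_nbij' (fun T => T.erase m) (fun T => insert m T) ?_ ?_ ?_ ?_ ?_
    · -- maps to
      intro T hT
      simp only [hP, Finset.mem_filter, Finset.mem_powerset] at hT ⊢
      obtain ⟨⟨⟨hTIcc, hST⟩, hTne⟩, hφT⟩ := hT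
      have hne : T.Nonempty := Finset.nonempty_iff_ne_empty.2 hTne
      rw [hφ] at hφT; simp only [dif_pos hne] at hφT
      constructor
      · intro t ht
        rw [Finset.mem_erase] at ht
        have h1 := (Finset.mem_Icc.1 (hTIcc ht.2)).2
        have h2 : T.min' hne ≤ t := T.min'_le t ht.2
        rw [Finset.mem_Icc]
        omega
      · exact Finset.erase_subset_erase m hST
    · -- inverse maps to
      intro T hT
      simp only [hP, Finset.mem_filter, Finset.mem_powerset] at hT ⊢
      obtain ⟨hTIcc, hST⟩ := hT
      have hmT : m ∉ T := by
        intro hmem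
        have := (Finset.mem_Icc.1 (hTIcc hmem)).1
        omega
      have hins : insert m T ⊆ Finset.Icc a n := by
        intro t ht
        rcases Finset.mem_insert.1 ht with rfl | ht'
        · exact Finset.mem_Icc.2 ⟨hm.1, le_trans hm.2 hbn⟩
        · have := Finset.mem_Icc.1 (hTIcc ht')
          exact Finset.mem_Icc.2 ⟨by omega, this.2⟩
      refine ⟨⟨⟨hins, ?_⟩, ?_⟩, ?_⟩
      · intro s hs
        by_cases hsm : s = m
        · exact hsm ▸ Finset.mem_insert_self m T
        · exact Finset.mem_insert_of_mem (hST (Finset.mem_erase.2 ⟨hsm, hs⟩))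
      · exact Finset.nonempty_iff_ne_empty.1 ⟨m, Finset.mem_insert_self m T⟩
      · have hne : (insert m T).Nonempty := ⟨m, Finset.mem_insert_self m T⟩
        rw [hφ]; simp only [dif_pos hne]
        refine le_antisymm (Finset.min'_le _ m (Finset.mem_insert_self m T)) ?_
        refine Finset.le_min' _ _ _ fun t ht => ?_
        rcases Finset.mem_insert.1 ht with rfl | ht'
        · exact le_rfl
        · exact le_of_lt (by have := (Finset.mem_Icc.1 (hTIcc ht')).1; omega)
    · -- left inverse
      intro T hT
      simp only [hP, Finset.mem_filter, Finset.mem_powerset] at hT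
      obtain ⟨⟨⟨hTIcc, hST⟩, hTne⟩, hφT⟩ := hT
      have hne : T.Nonempty := Finset.nonempty_iff_ne_empty.2 hTne
      rw [hφ] at hφT; simp only [dif_pos hne] at hφT
      exact Finset.insert_erase (hφT ▸ T.min'_mem hne)
    · -- right inverse
      intro T hT
      simp only [Finset.mem_filter, Finset.mem_powerset] at hT
      have hmT : m ∉ T := by
        intro hmem
        have := (Finset.mem_Icc.1 (hT.1 hmem)).1
        omega
      exact Finset.erase_insert hmT
    · -- values agree
      intro T hT
      simp only [hP, Finset.mem_filter, Finset.mem_powerset] at hT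
      obtain ⟨⟨⟨hTIcc, hST⟩, hTne⟩, hφT⟩ := hT
      have hne : T.Nonempty := Finset.nonempty_iff_ne_empty.2 hTne
      rw [hφ] at hφT; simp only [dif_pos hne] at hφT
      rw [Finset.insert_erase (hφT ▸ T.min'_mem hne)]

lemma sort_insert_min (m : ℕ) (T : Finset ℕ) (hT : ∀ t ∈ T, m < t) :
    (insert m T).sort (· ≤ ·) = m :: T.sort (· ≤ ·) := by
  refine Finset.sort_insert (· ≤ ·) (fun b hb => le_of_lt (hT b hb)) ?_
  intro hm; exact absurd (hT m hm) (lt_irrefl m)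

lemma sort_min_cons (S : Finset ℕ) (h : S.Nonempty) :
    S.sort (· ≤ ·) = S.min' h :: (S.erase (S.min' h)).sort (· ≤ ·) := by
  conv_lhs => rw [← Finset.insert_erase (S.min'_mem h)]
  rw [Finset.sort_insert (· ≤ ·) (fun b hb => S.min'_le b (Finset.mem_of_mem_erase hb))
    (Finset.notMem_erase _ _)]

lemma Ioo_succ_top (a n : ℕ) : Finset.Ioo a (n + 1) = Finset.Icc (a + 1) n := by
  ext t; simp only [Finset.mem_Ioo, Finset.mem_Icc]; omega

/-- The main inductive identity: the alternating sum of `fbar` over all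
rank sets between `S` and the full rank interval. -/
lemma key (hq : IsQuasiGraded ρ ζ) (hE : IsEulerian ρ ζ) (n : ℕ) (h1 : ρ (⊤ : α) = n + 1) :
    ∀ N : ℕ, ∀ x : α, ρ x ≤ n → n + 1 - ρ x ≤ N → ∀ S : Finset ℕ,
    S ⊆ Finset.Icc (ρ x + 1) n →
    ∑ T ∈ (Finset.Icc (ρ x + 1) n).powerset.filter (S ⊆ ·),
        (-1 : ℚ) ^ T.card * fbar ρ ζ x (T.sort (· ≤ ·))
      = (-1) ^ n * (-1) ^ (ρ x) * fbar ρ ζ x (S.sort (· ≤ ·)) := by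
  intro N
  induction N with
  | zero => intro x hx hxN; omega
  | succ N IH =>
    intro x hx hxN S hS
    -- the inner simplification, for any m in the relevant range
    have hinner : ∀ m, ρ x + 1 ≤ m → m ≤ n → (∀ s ∈ S, m ≤ s) →
        ∑ T ∈ (Finset.Icc (m + 1) n).powerset.filter (S.erase m ⊆ ·),
          (-1 : ℚ) ^ (insert m T).card * fbar ρ ζ x ((insert m T).sort (· ≤ ·))
        = -((-1 : ℚ) ^ n * (-1) ^ m *
            ∑ y ∈ Finset.univ.filter (fun y => ρ y = m),
              ζ x y * fbar ρ ζ y ((S.erase m).sort (· ≤ ·))) := by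
      intro m hm1 hm2 hmS
      have step : ∀ T ∈ (Finset.Icc (m + 1) n).powerset.filter (S.erase m ⊆ ·),
          (-1 : ℚ) ^ (insert m T).card * fbar ρ ζ x ((insert m T).sort (· ≤ ·))
          = ∑ y ∈ Finset.univ.filter (fun y => ρ y = m),
              ζ x y * (-((-1 : ℚ) ^ T.card * fbar ρ ζ y (T.sort (· ≤ ·)))) := by
        intro T hT
        simp only [Finset.mem_filter, Finset.mem_powerset] at hT
        have hmt : ∀ t ∈ T, m < t := fun t ht => by
          have := Finset.mem_Icc.1 (hT.1 ht); omega
        have hmT : m ∉ T := fun hmem => absurd (hmt m hmem) (lt_irrefl m)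
        rw [Finset.card_insert_of_notMem hmT, sort_insert_min m T hmt, fbar_cons,
          Finset.mul_sum, pow_succ]
        refine Finset.sum_congr rfl fun y _ => ?_
        ring
      rw [Finset.sum_congr rfl step, Finset.sum_comm]
      have swap : ∀ y ∈ Finset.univ.filter (fun y => ρ y = m),
          ∑ T ∈ (Finset.Icc (m + 1) n).powerset.filter (S.erase m ⊆ ·),
            ζ x y * (-((-1 : ℚ) ^ T.card * fbar ρ ζ y (T.sort (· ≤ ·))))
          = ζ x y * (-((-1 : ℚ) ^ n * (-1) ^ m * fbar ρ ζ y ((S.erase m).sort (· ≤ ·)))) := by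
        intro y hy
        have hρy : ρ y = m := (Finset.mem_filter.1 hy).2
        have hIH := IH y (by omega) (by omega) (S.erase m) ?_
        · rw [hρy] at hIH
          rw [← Finset.mul_sum, Finset.sum_neg_distrib, hIH]
        · intro s hs
          rw [Finset.mem_erase] at hs
          have h2 := Finset.mem_Icc.1 (hS hs.2)
          have h3 := hmS s hs.2
          rw [Finset.mem_Icc, hρy]
          exact ⟨by omega, h2.2⟩
      rw [Finset.sum_congr rfl swap]
      have final : ∀ y ∈ Finset.univ.filter (fun y => ρ y = m),
          ζ x y * -((-1 : ℚ) ^ n * (-1) ^ m * fbar ρ ζ y ((S.erase m).sort (· ≤ ·)))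
          = -((-1 : ℚ) ^ n * (-1) ^ m * (ζ x y * fbar ρ ζ y ((S.erase m).sort (· ≤ ·)))) :=
        fun y _ => by ring
      rw [Finset.sum_congr rfl final, Finset.sum_neg_distrib, ← Finset.mul_sum]
    by_cases hSe : S = ∅
    · subst hSe
      rw [decomp (ρ x + 1) n n ∅ (Finset.empty_subset _) (Or.inl ⟨rfl, rfl⟩)]
      rw [if_pos rfl]
      have e : (∑ m ∈ Finset.Icc (ρ x + 1) n,
            ∑ T ∈ (Finset.Icc (m + 1) n).powerset.filter ((∅ : Finset ℕ).erase m ⊆ ·),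
              (-1 : ℚ) ^ (insert m T).card * fbar ρ ζ x ((insert m T).sort (· ≤ ·)))
          = ∑ m ∈ Finset.Icc (ρ x + 1) n,
            -((-1 : ℚ) ^ n * (-1) ^ m *
              ∑ y ∈ Finset.univ.filter (fun y => ρ y = m),
                ζ x y * fbar ρ ζ y (((∅ : Finset ℕ).erase m).sort (· ≤ ·))) := by
        refine Finset.sum_congr rfl fun m hm => ?_
        rw [Finset.mem_Icc] at hm
        exact hinner m hm.1 hm.2 (fun s hs => absurd hs (Finset.notMem_empty s))
      rw [e]
      simp only [Finset.erase_empty, Finset.sort_empty, fbar_nil, Finset.card_empty,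
        pow_zero, one_mul]
      have hbr := bracket ρ ζ hq hE (x := x) (z := ⊤) (by rw [h1]; omega)
      rw [h1, Ioo_succ_top] at hbr
      have hfac : ∑ m ∈ Finset.Icc (ρ x + 1) n,
          -((-1 : ℚ) ^ n * (-1) ^ m * ∑ y ∈ Finset.univ.filter (fun y => ρ y = m),
            ζ x y * ζ y ⊤)
          = -((-1 : ℚ) ^ n * (-((-1) ^ (ρ x) + (-1) ^ (n + 1)) * ζ x ⊤)) := by
        rw [Finset.sum_neg_distrib, ← hbr, Finset.mul_sum]
        congr 1
        refine Finset.sum_congr rfl fun m _ => ?_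
        ring
      rw [hfac, pow_succ]
      linear_combination (-(ζ x ⊤)) * neg_one_pow_self_mul n
    · have hne : S.Nonempty := Finset.nonempty_iff_ne_empty.2 hSe
      set s₁ := S.min' hne with hs₁def
      have hs₁S : s₁ ∈ S := S.min'_mem hne
      have hs₁I := Finset.mem_Icc.1 (hS hs₁S)
      rw [decomp (ρ x + 1) n s₁ S hS (Or.inr ⟨hs₁S, fun s hs => S.min'_le s hs⟩)]
      rw [if_neg hSe, zero_add]
      have e : (∑ m ∈ Finset.Icc (ρ x + 1) s₁,
            ∑ T ∈ (Finset.Icc (m + 1) n).powerset.filter (S.erase m ⊆ ·),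
              (-1 : ℚ) ^ (insert m T).card * fbar ρ ζ x ((insert m T).sort (· ≤ ·)))
          = ∑ m ∈ Finset.Icc (ρ x + 1) s₁,
            -((-1 : ℚ) ^ n * (-1) ^ m *
              ∑ y ∈ Finset.univ.filter (fun y => ρ y = m),
                ζ x y * fbar ρ ζ y ((S.erase m).sort (· ≤ ·))) := by
        refine Finset.sum_congr rfl fun m hm => ?_
        rw [Finset.mem_Icc] at hm
        exact hinner m hm.1 (le_trans hm.2 hs₁I.2)
          (fun s hs => le_trans hm.2 (S.min'_le s hs))
      rw [e]
      rw [show Finset.Icc (ρ x + 1) s₁ = insert s₁ (Finset.Ioo (ρ x) s₁) from by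
        rw [Finset.Ioo_insert_right (show ρ x < s₁ by omega), Finset.Icc_add_one_left_eq_Ioc]]
      rw [Finset.sum_insert (by simp [Finset.mem_Ioo])]
      have hrest : ∑ m ∈ Finset.Ioo (ρ x) s₁,
          -((-1 : ℚ) ^ n * (-1) ^ m *
            ∑ y ∈ Finset.univ.filter (fun y => ρ y = m),
              ζ x y * fbar ρ ζ y ((S.erase m).sort (· ≤ ·)))
          = ∑ m ∈ Finset.Ioo (ρ x) s₁,
            -((-1 : ℚ) ^ n *
              ∑ z ∈ Finset.univ.filter (fun z => ρ z = s₁),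
                ((-1 : ℚ) ^ m * ∑ y ∈ Finset.univ.filter (fun y => ρ y = m),
                  ζ x y * ζ y z) * fbar ρ ζ z ((S.erase s₁).sort (· ≤ ·))) := by
        refine Finset.sum_congr rfl fun m hm => ?_
        rw [Finset.mem_Ioo] at hm
        have hmS : m ∉ S := fun hmem => absurd (S.min'_le m hmem) (by omega)
        rw [Finset.erase_eq_of_notMem hmS, sort_min_cons S hne, ← hs₁def]
        have e2 : ∀ y ∈ Finset.univ.filter (fun y => ρ y = m),
            ζ x y * fbar ρ ζ y (s₁ :: (S.erase s₁).sort (· ≤ ·))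
            = ζ x y * ∑ z ∈ Finset.univ.filter (fun z => ρ z = s₁),
                ζ y z * fbar ρ ζ z ((S.erase s₁).sort (· ≤ ·)) :=
          fun y _ => by rw [fbar_cons]
        rw [Finset.sum_congr rfl e2]
        have e3 : ∑ y ∈ Finset.univ.filter (fun y => ρ y = m),
            ζ x y * ∑ z ∈ Finset.univ.filter (fun z => ρ z = s₁),
              ζ y z * fbar ρ ζ z ((S.erase s₁).sort (· ≤ ·))
            = ∑ z ∈ Finset.univ.filter (fun z => ρ z = s₁),
                ∑ y ∈ Finset.univ.filter (fun y => ρ y = m),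
                  ζ x y * (ζ y z * fbar ρ ζ z ((S.erase s₁).sort (· ≤ ·))) := by
          simp only [Finset.mul_sum]
          exact Finset.sum_comm
        rw [e3]
        congr 1
        simp only [Finset.mul_sum, Finset.sum_mul]
        refine Finset.sum_congr rfl fun z _ => Finset.sum_congr rfl fun y _ => by ring
      rw [hrest]
      have e5 : ∑ m ∈ Finset.Ioo (ρ x) s₁,
          -((-1 : ℚ) ^ n *
            ∑ z ∈ Finset.univ.filter (fun z => ρ z = s₁),
              ((-1 : ℚ) ^ m * ∑ y ∈ Finset.univ.filter (fun y => ρ y = m),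
                ζ x y * ζ y z) * fbar ρ ζ z ((S.erase s₁).sort (· ≤ ·)))
          = -((-1 : ℚ) ^ n *
              ∑ z ∈ Finset.univ.filter (fun z => ρ z = s₁),
                (∑ m ∈ Finset.Ioo (ρ x) s₁,
                  (-1 : ℚ) ^ m * ∑ y ∈ Finset.univ.filter (fun y => ρ y = m),
                    ζ x y * ζ y z) * fbar ρ ζ z ((S.erase s₁).sort (· ≤ ·))) := by
        rw [Finset.sum_neg_distrib, ← Finset.mul_sum]
        congr 2
        rw [Finset.sum_comm]
        refine Finset.sum_congr rfl fun z _ => ?_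
        rw [Finset.sum_mul]
      rw [e5]
      have e6 : ∀ z ∈ Finset.univ.filter (fun z => ρ z = s₁),
          (∑ m ∈ Finset.Ioo (ρ x) s₁,
            (-1 : ℚ) ^ m * ∑ y ∈ Finset.univ.filter (fun y => ρ y = m),
              ζ x y * ζ y z) * fbar ρ ζ z ((S.erase s₁).sort (· ≤ ·))
          = -((-1 : ℚ) ^ (ρ x) + (-1) ^ s₁) *
              (ζ x z * fbar ρ ζ z ((S.erase s₁).sort (· ≤ ·))) := by
        intro z hz
        have hρz : ρ z = s₁ := (Finset.mem_filter.1 hz).2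
        have hbr := bracket ρ ζ hq hE (x := x) (z := z) (by omega)
        rw [hρz] at hbr
        rw [hbr]
        ring
      rw [Finset.sum_congr rfl e6]
      rw [← Finset.mul_sum]
      rw [sort_min_cons S hne, ← hs₁def]
      rw [show fbar ρ ζ x (s₁ :: (S.erase s₁).sort (· ≤ ·))
          = ∑ z ∈ Finset.univ.filter (fun z => ρ z = s₁),
            ζ x z * fbar ρ ζ z ((S.erase s₁).sort (· ≤ ·)) from rfl]
      ring

lemma chainZeta_cons {k : ℕ} (x : α) (g : Fin (k + 1) → α) :
    chainZeta ζ (Fin.cons x g) = ζ x (g 0) * chainZeta ζ g := by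
  unfold chainZeta
  rw [List.ofFn_succ, List.prod_cons]
  congr 1

lemma cons_last {k : ℕ} (x : α) (g : Fin (k + 1) → α) :
    (Fin.cons x g : Fin (k + 2) → α) (Fin.last (k + 1)) = g (Fin.last k) := by
  rw [← Fin.succ_last, Fin.cons_succ]

lemma strictMono_cons {k : ℕ} (x : α) (g : Fin (k + 1) → α) :
    StrictMono (Fin.cons x g) ↔ x < g 0 ∧ StrictMono g := by
  rw [Fin.strictMono_iff_lt_succ, Fin.strictMono_iff_lt_succ]
  constructor
  · intro h
    refine ⟨?_, fun i => ?_⟩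
    · have := h 0
      simpa [Fin.cons_zero, Fin.cons_succ] using this
    · have := h i.succ
      rwa [← Fin.succ_castSucc, Fin.cons_succ, Fin.cons_succ] at this
  · rintro ⟨h0, h⟩ i
    rcases Fin.eq_zero_or_eq_succ i with rfl | ⟨j, rfl⟩
    · simpa [Fin.cons_zero, Fin.cons_succ] using h0
    · rw [← Fin.succ_castSucc, Fin.cons_succ, Fin.cons_succ]
      exact h j

lemma interior_image_cons {k : ℕ} (x : α) (g : Fin (k + 1) → α) :
    (Finset.univ.filter
        (fun i : Fin (k + 2) => i ≠ 0 ∧ i ≠ Fin.last (k + 1))).image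
        (fun i => ρ ((Fin.cons x g : Fin (k + 2) → α) i))
      = (Finset.univ.filter (fun j : Fin (k + 1) => j ≠ Fin.last k)).image
          (fun j => ρ (g j)) := by
  ext r
  simp only [Finset.mem_image, Finset.mem_filter, Finset.mem_univ, true_and]
  constructor
  · rintro ⟨i, ⟨hi0, hil⟩, hr⟩
    obtain ⟨j, rfl⟩ : ∃ j : Fin (k + 1), i = j.succ :=
      ⟨i.pred hi0, (Fin.succ_pred i hi0).symm⟩
    refine ⟨j, fun hj => hil ?_, ?_⟩
    · rw [hj, Fin.succ_last]
    · rw [← hr, Fin.cons_succ]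
  · rintro ⟨j, hj, hr⟩
    refine ⟨j.succ, ⟨Fin.succ_ne_zero j, fun h => hj ?_⟩, ?_⟩
    · rw [← Fin.succ_last] at h
      exact Fin.succ_injective _ h
    · rw [Fin.cons_succ, hr]

lemma filter_ne_last_eq (k : ℕ) (hk : k ≠ 0) :
    (Finset.univ.filter (fun j : Fin (k + 1) => j ≠ Fin.last k))
      = insert 0 (Finset.univ.filter
          (fun j : Fin (k + 1) => j ≠ 0 ∧ j ≠ Fin.last k)) := by
  ext j
  simp only [Finset.mem_insert, Finset.mem_filter, Finset.mem_univ, true_and]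
  constructor
  · intro h
    by_cases h0 : j = 0
    · exact Or.inl h0
    · exact Or.inr ⟨h0, h⟩
  · rintro (rfl | ⟨_, h⟩)
    · intro hl
      apply hk
      have := congrArg Fin.val hl
      simpa using this.symm
    · exact h

lemma insert_eq_insert_min {A B : Finset ℕ} {a b : ℕ} (hA : ∀ t ∈ A, a < t)
    (hB : ∀ t ∈ B, b < t) (h : insert a A = insert b B) : a = b ∧ A = B := by
  have hab : a = b := by
    have ha : a ∈ insert b B := h ▸ Finset.mem_insert_self a A
    have hb : b ∈ insert a A := by rw [h]; exact Finset.mem_insert_self b B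
    rcases Finset.mem_insert.1 ha with h1 | h1
    · exact h1
    · rcases Finset.mem_insert.1 hb with h2 | h2
      · exact h2.symm
      · have := hA b h2; have := hB a h1; omega
  subst hab
  refine ⟨rfl, ?_⟩
  have haA : a ∉ A := fun h' => absurd (hA a h') (lt_irrefl _)
  have haB : a ∉ B := fun h' => absurd (hB a h') (lt_irrefl _)
  rw [← Finset.erase_insert haA, h, Finset.erase_insert haB]

lemma flagF_chain (hq : IsQuasiGraded ρ ζ) :
    ∀ L : List ℕ, ∀ x : α, List.Chain' (· < ·) (ρ x :: (L ++ [ρ (⊤ : α)])) →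
    (∑ k ∈ Finset.range (Fintype.card α), ∑ f : Fin (k + 1) → α,
      if IsChainFrom f x ⊤ ∧
          (Finset.univ.filter (fun i : Fin (k + 1) => i ≠ 0 ∧ i ≠ Fin.last k)).image
            (fun i => ρ (f i)) = L.toFinset
        then chainZeta ζ f else 0) = fbar ρ ζ x L := by
  intro L
  induction L with
  | nil =>
    intro x hx
    have hlt : ρ x < ρ (⊤ : α) := (List.isChain_cons_cons.1 hx).1
    have hne : x ≠ ⊤ := fun h => by rw [h] at hlt; exact lt_irrefl _ hlt
    have hxt : x < ⊤ := lt_of_le_of_ne le_top hne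
    have hcard : 1 < Fintype.card α := Fintype.one_lt_card_iff_nontrivial.2 ⟨⟨x, ⊤, hne⟩⟩
    rw [fbar_nil]
    rw [Finset.sum_eq_single_of_mem 1 (Finset.mem_range.2 hcard) ?side]
    case side =>
      intro k hk hk1
      rcases k with _ | (_ | k)
      · refine Finset.sum_eq_zero fun f _ => ?_
        rw [if_neg]
        rintro ⟨⟨hm, h0, hl⟩, himg⟩
        apply hne
        rw [← h0, ← hl]
        rfl
      · exact absurd rfl hk1
      · refine Finset.sum_eq_zero fun f _ => ?_
        rw [if_neg]
        rintro ⟨⟨hm, h0, hl⟩, himg⟩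
        have h1 : (1 : Fin (k + 3)) ∈ Finset.univ.filter
            (fun i : Fin (k + 3) => i ≠ 0 ∧ i ≠ Fin.last (k + 2)) := by
          refine Finset.mem_filter.2 ⟨Finset.mem_univ _, ?_, ?_⟩
          · intro h; have := congrArg Fin.val h; simp at this
          · intro h; have := congrArg Fin.val h; simp [Fin.val_last] at this
        rw [List.toFinset_nil] at himg
        rw [Finset.image_eq_empty.1 himg] at h1
        exact absurd h1 (Finset.notMem_empty _)
    · -- value at k = 1
      refine (Finset.sum_eq_single_of_mem (Fin.cons x (fun _ => ⊤))
        (Finset.mem_univ _) ?_).trans ?_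
      · intro f _ hf
        rw [if_neg]
        rintro ⟨⟨hm, h0, hl⟩, -⟩
        apply hf
        funext i
        fin_cases i
        · simpa using h0
        · simpa using hl
      · rw [if_pos]
        · show chainZeta ζ (Fin.cons x (fun _ => ⊤)) = ζ x ⊤
          unfold chainZeta
          simp [List.ofFn_succ]
        · refine ⟨⟨?_, rfl, rfl⟩, ?_⟩
          · refine (strictMono_cons x _).2 ⟨hxt, ?_⟩
            intro a b hab
            exact absurd (Fin.lt_def.1 hab) (by have := a.isLt; have := b.isLt; omega)
          · rw [List.toFinset_nil, Finset.image_eq_empty]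
            ext i
            simp only [Finset.mem_filter, Finset.mem_univ, true_and,
              Finset.notMem_empty, iff_false, not_and]
            intro hi0 hil
            apply hi0
            apply Fin.ext
            have h1 := i.isLt
            have h2 : i.val ≠ 1 := fun h => hil (Fin.ext (by simpa [Fin.val_last] using h))
            simp only [Fin.val_zero]
            omega
  | cons s L' IH =>
    intro x hx
    have hpw := (List.isChain_iff_pairwise).1 hx
    rcases List.pairwise_cons.1 hpw with ⟨hx_all, hpw'⟩
    rcases List.pairwise_cons.1 hpw' with ⟨hs_all, hpwL⟩
    have hxs : ρ x < s := hx_all s (by simp)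
    have hstop : s < ρ (⊤ : α) := hs_all (ρ ⊤) (by simp)
    have hsL : ∀ t ∈ L'.toFinset, s < t :=
      fun t ht => hs_all t (List.mem_append_left _ (List.mem_toFinset.1 ht))
    have hchain_tail : List.Chain' (· < ·) (s :: (L' ++ [ρ (⊤ : α)])) :=
      (List.isChain_cons_cons.1 hx).2
    have : Nonempty α := ⟨⊥⟩
    obtain ⟨N', hN'⟩ := Nat.exists_eq_succ_of_ne_zero
      (Nat.pos_iff_ne_zero.1 (Fintype.card_pos (α := α)))
    -- pointwise reduction for chains of positive length
    have hstep : ∀ k : ℕ,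
        (∑ f : Fin (k + 2) → α,
          if IsChainFrom f x ⊤ ∧
              (Finset.univ.filter (fun i : Fin (k + 2) => i ≠ 0 ∧ i ≠ Fin.last (k + 1))).image
                (fun i => ρ (f i)) = (s :: L').toFinset
            then chainZeta ζ f else 0)
        = ∑ y ∈ Finset.univ.filter (fun y => ρ y = s),
            ζ x y * (∑ g : Fin (k + 1) → α,
              if IsChainFrom g y ⊤ ∧
                  (Finset.univ.filter (fun j : Fin (k + 1) => j ≠ 0 ∧ j ≠ Fin.last k)).image
                    (fun j => ρ (g j)) = L'.toFinset
                then chainZeta ζ g else 0) := by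
      intro k
      have e1 : (∑ f : Fin (k + 2) → α,
          if IsChainFrom f x ⊤ ∧
              (Finset.univ.filter (fun i : Fin (k + 2) => i ≠ 0 ∧ i ≠ Fin.last (k + 1))).image
                (fun i => ρ (f i)) = (s :: L').toFinset
            then chainZeta ζ f else 0)
          = ∑ p : α × (Fin (k + 1) → α),
            (if IsChainFrom (Fin.cons p.1 p.2 : Fin (k + 2) → α) x ⊤ ∧
              (Finset.univ.filter (fun i : Fin (k + 2) => i ≠ 0 ∧ i ≠ Fin.last (k + 1))).image
                (fun i => ρ ((Fin.cons p.1 p.2 : Fin (k + 2) → α) i)) = (s :: L').toFinset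
            then chainZeta ζ (Fin.cons p.1 p.2 : Fin (k + 2) → α) else 0) :=
        (Fintype.sum_equiv (Fin.consEquiv (fun _ => α)) _ _ (fun p => rfl)).symm
      rw [e1, Fintype.sum_prod_type]
      rw [Fintype.sum_eq_single x ?hvanish]
      case hvanish =>
        intro a ha
        refine Finset.sum_eq_zero fun g _ => ?_
        rw [if_neg]
        rintro ⟨⟨-, h0, -⟩, -⟩
        exact ha (by rw [← h0]; rfl)
      -- pointwise identity
      have hpt : ∀ g : Fin (k + 1) → α,
          (if IsChainFrom (Fin.cons x g : Fin (k + 2) → α) x ⊤ ∧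
              (Finset.univ.filter (fun i : Fin (k + 2) => i ≠ 0 ∧ i ≠ Fin.last (k + 1))).image
                (fun i => ρ ((Fin.cons x g : Fin (k + 2) → α) i)) = (s :: L').toFinset
            then chainZeta ζ (Fin.cons x g : Fin (k + 2) → α) else 0)
          = (if ρ (g 0) = s ∧ (IsChainFrom g (g 0) ⊤ ∧
              (Finset.univ.filter (fun j : Fin (k + 1) => j ≠ 0 ∧ j ≠ Fin.last k)).image
                (fun j => ρ (g j)) = L'.toFinset)
            then ζ x (g 0) * chainZeta ζ g else 0) := by
        intro g
        by_cases hR : ρ (g 0) = s ∧ (IsChainFrom g (g 0) ⊤ ∧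
            (Finset.univ.filter (fun j : Fin (k + 1) => j ≠ 0 ∧ j ≠ Fin.last k)).image
              (fun j => ρ (g j)) = L'.toFinset)
        · obtain ⟨hgs, ⟨hgm, -, hgl⟩, himg⟩ := hR
          have hk0 : k ≠ 0 := by
            intro hk; subst hk
            have hg0 : g 0 = ⊤ := hgl
            rw [hg0] at hgs
            omega
          by_cases hxg : x < g 0
          · rw [if_pos, if_pos]
            · exact chainZeta_cons ζ x g
            · exact ⟨hgs, ⟨hgm, rfl, hgl⟩, himg⟩
            · refine ⟨⟨(strictMono_cons x g).2 ⟨hxg, hgm⟩, rfl, ?_⟩, ?_⟩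
              · rw [cons_last]; exact hgl
              · rw [interior_image_cons ρ x g, filter_ne_last_eq k hk0,
                  Finset.image_insert, himg, hgs, List.toFinset_cons]
          · rw [if_neg, if_pos]
            · have hnle : ¬ x ≤ g 0 := fun hle =>
                hxg (lt_of_le_of_ne hle (fun he => by rw [← he] at hgs; omega))
              rw [hq.2.2 _ _ hnle, zero_mul]
            · exact ⟨hgs, ⟨hgm, rfl, hgl⟩, himg⟩
            · rintro ⟨⟨hm, -, -⟩, -⟩
              exact hxg ((strictMono_cons x g).1 hm).1
        · rw [if_neg hR, if_neg]
          rintro ⟨⟨hm, -, hl⟩, himg⟩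
          apply hR
          have hmc := (strictMono_cons x g).1 hm
          have hgl : g (Fin.last k) = ⊤ := by rw [← cons_last x g]; exact hl
          have hk0 : k ≠ 0 := by
            intro hk; subst hk
            have hs' : s ∈ (Finset.univ.filter
                (fun i : Fin 2 => i ≠ 0 ∧ i ≠ Fin.last 1)).image
                (fun i => ρ ((Fin.cons x g : Fin 2 → α) i)) := by
              rw [himg]; simp
            rcases Finset.mem_image.1 hs' with ⟨i, hi, -⟩
            rcases (Finset.mem_filter.1 hi).2 with ⟨hi0, hil⟩
            apply hil
            apply Fin.ext
            have h1 := i.isLt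
            have h2 : i.val ≠ 0 := fun h => hi0 (Fin.ext h)
            simp only [Fin.val_last]
            omega
          have h3 : (Finset.univ.filter
                (fun i : Fin (k + 2) => i ≠ 0 ∧ i ≠ Fin.last (k + 1))).image
                (fun i => ρ ((Fin.cons x g : Fin (k + 2) → α) i))
              = insert (ρ (g 0))
                ((Finset.univ.filter (fun j : Fin (k + 1) => j ≠ 0 ∧ j ≠ Fin.last k)).image
                  (fun j => ρ (g j))) := by
            rw [interior_image_cons ρ x g, filter_ne_last_eq k hk0, Finset.image_insert]
          have himg2 : insert (ρ (g 0))
              ((Finset.univ.filter (fun j : Fin (k + 1) => j ≠ 0 ∧ j ≠ Fin.last k)).image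
                (fun j => ρ (g j))) = insert s L'.toFinset := by
            rw [← h3, himg, List.toFinset_cons]
          have hAbound : ∀ t ∈ (Finset.univ.filter
              (fun j : Fin (k + 1) => j ≠ 0 ∧ j ≠ Fin.last k)).image (fun j => ρ (g j)),
              ρ (g 0) < t := by
            intro t ht
            rcases Finset.mem_image.1 ht with ⟨j, hj, rfl⟩
            have hj0 : j ≠ 0 := (Finset.mem_filter.1 hj).2.1
            exact hq.1 (hmc.2 (Fin.pos_of_ne_zero hj0))
          obtain ⟨h1, h2⟩ := insert_eq_insert_min hAbound hsL himg2
          exact ⟨h1, ⟨hmc.2, rfl, hgl⟩, h2⟩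
      rw [Fintype.sum_congr _ _ hpt]
      -- extract y = g 0
      have hswap : ∀ g : Fin (k + 1) → α,
          (∑ y ∈ Finset.univ.filter (fun y => ρ y = s),
            (if IsChainFrom g y ⊤ ∧
                (Finset.univ.filter (fun j : Fin (k + 1) => j ≠ 0 ∧ j ≠ Fin.last k)).image
                  (fun j => ρ (g j)) = L'.toFinset
              then ζ x y * chainZeta ζ g else 0))
          = (if ρ (g 0) = s ∧ (IsChainFrom g (g 0) ⊤ ∧
                (Finset.univ.filter (fun j : Fin (k + 1) => j ≠ 0 ∧ j ≠ Fin.last k)).image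
                  (fun j => ρ (g j)) = L'.toFinset)
              then ζ x (g 0) * chainZeta ζ g else 0) := by
        intro g
        by_cases h : ρ (g 0) = s ∧ (IsChainFrom g (g 0) ⊤ ∧
            (Finset.univ.filter (fun j : Fin (k + 1) => j ≠ 0 ∧ j ≠ Fin.last k)).image
              (fun j => ρ (g j)) = L'.toFinset)
        · rw [if_pos h]
          refine (Finset.sum_eq_single_of_mem (g 0)
            (Finset.mem_filter.2 ⟨Finset.mem_univ _, h.1⟩) ?_).trans (if_pos h.2)
          intro y hy hne'
          rw [if_neg]
          rintro ⟨⟨-, h0, -⟩, -⟩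
          exact hne' h0.symm
        · rw [if_neg h]
          refine Finset.sum_eq_zero fun y hy => ?_
          rw [if_neg]
          rintro ⟨hch, himg⟩
          exact h ⟨by rw [hch.2.1]; exact (Finset.mem_filter.1 hy).2,
            ⟨hch.1, rfl, hch.2.2⟩, himg⟩
      rw [← Fintype.sum_congr _ _ hswap]
      rw [Finset.sum_comm]
      refine Finset.sum_congr rfl fun y hy => ?_
      rw [Finset.mul_sum]
      refine Finset.sum_congr rfl fun g _ => ?_
      by_cases hc : IsChainFrom g y ⊤ ∧
          (Finset.univ.filter (fun j : Fin (k + 1) => j ≠ 0 ∧ j ≠ Fin.last k)).image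
            (fun j => ρ (g j)) = L'.toFinset
      · rw [if_pos hc, if_pos hc]
      · rw [if_neg hc, if_neg hc, mul_zero]
    -- assemble
    rw [fbar_cons, hN', Finset.sum_range_succ']
    have hzero0 : (∑ f : Fin (0 + 1) → α,
        if IsChainFrom f x ⊤ ∧
            (Finset.univ.filter (fun i : Fin (0 + 1) => i ≠ 0 ∧ i ≠ Fin.last 0)).image
              (fun i => ρ (f i)) = (s :: L').toFinset
          then chainZeta ζ f else 0) = 0 := by
      refine Finset.sum_eq_zero fun f _ => ?_
      rw [if_neg]
      rintro ⟨-, himg⟩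
      have hs' : s ∈ (Finset.univ.filter
          (fun i : Fin (0 + 1) => i ≠ 0 ∧ i ≠ Fin.last 0)).image (fun i => ρ (f i)) := by
        rw [himg]; simp
      rcases Finset.mem_image.1 hs' with ⟨i, hi, -⟩
      refine (Finset.mem_filter.1 hi).2.1 ?_
      apply Fin.ext
      have := i.isLt
      simp only [Fin.val_zero]
      omega
    rw [hzero0, add_zero]
    have e2 : ∀ k ∈ Finset.range N',
        (∑ f : Fin (k + 1 + 1) → α,
          if IsChainFrom f x ⊤ ∧
              (Finset.univ.filter
                (fun i : Fin (k + 1 + 1) => i ≠ 0 ∧ i ≠ Fin.last (k + 1))).image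
                (fun i => ρ (f i)) = (s :: L').toFinset
            then chainZeta ζ f else 0)
        = ∑ y ∈ Finset.univ.filter (fun y => ρ y = s),
            ζ x y * (∑ g : Fin (k + 1) → α,
              if IsChainFrom g y ⊤ ∧
                  (Finset.univ.filter (fun j : Fin (k + 1) => j ≠ 0 ∧ j ≠ Fin.last k)).image
                    (fun j => ρ (g j)) = L'.toFinset
                then chainZeta ζ g else 0) := fun k _ => hstep k
    rw [Finset.sum_congr rfl e2, Finset.sum_comm]
    refine Finset.sum_congr rfl fun y hy => ?_
    have hρy : ρ y = s := (Finset.mem_filter.1 hy).2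
    rw [← Finset.mul_sum]
    -- apply IH at y
    have hchain_y : List.Chain' (· < ·) (ρ y :: (L' ++ [ρ (⊤ : α)])) := by
      rw [hρy]; exact hchain_tail
    have hIH := IH y hchain_y
    rw [hN', Finset.sum_range_succ] at hIH
    -- the top term vanishes after multiplying by ζ x y
    have hvan : ζ x y * (∑ g : Fin (N' + 1) → α,
        if IsChainFrom g y ⊤ ∧
            (Finset.univ.filter (fun j : Fin (N' + 1) => j ≠ 0 ∧ j ≠ Fin.last N')).image
              (fun j => ρ (g j)) = L'.toFinset
          then chainZeta ζ g else 0) = 0 := by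
      by_cases hD : (∑ g : Fin (N' + 1) → α,
          if IsChainFrom g y ⊤ ∧
              (Finset.univ.filter (fun j : Fin (N' + 1) => j ≠ 0 ∧ j ≠ Fin.last N')).image
                (fun j => ρ (g j)) = L'.toFinset
            then chainZeta ζ g else 0) = 0
      · rw [hD, mul_zero]
      · have hex : ∃ g : Fin (N' + 1) → α, IsChainFrom g y ⊤ ∧
            (Finset.univ.filter (fun j : Fin (N' + 1) => j ≠ 0 ∧ j ≠ Fin.last N')).image
              (fun j => ρ (g j)) = L'.toFinset := by
          by_contra hno
          exact hD (Finset.sum_eq_zero fun g _ => if_neg (fun hc => hno ⟨g, hc⟩))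
        obtain ⟨g, hg⟩ := hex
        have hbij : Function.Bijective g :=
          (Fintype.bijective_iff_injective_and_card g).2
            ⟨hg.1.1.injective, by rw [Fintype.card_fin, hN']⟩
        have hleast : ∀ a : α, y ≤ a := by
          intro a
          obtain ⟨i, rfl⟩ := hbij.2 a
          rw [← hg.1.2.1]
          exact hg.1.1.monotone (Fin.zero_le i)
        have hnle : ¬ x ≤ y := by
          intro hxy
          have hxy' : x = y := le_antisymm hxy (hleast x)
          rw [hxy', hρy] at hxs
          omega
        rw [hq.2.2 _ _ hnle, zero_mul]
    calc ζ x y * ∑ k ∈ Finset.range N', (∑ g : Fin (k + 1) → α,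
          if IsChainFrom g y ⊤ ∧
              (Finset.univ.filter (fun j : Fin (k + 1) => j ≠ 0 ∧ j ≠ Fin.last k)).image
                (fun j => ρ (g j)) = L'.toFinset
            then chainZeta ζ g else 0)
        = ζ x y * ((∑ k ∈ Finset.range N', (∑ g : Fin (k + 1) → α,
            if IsChainFrom g y ⊤ ∧
                (Finset.univ.filter (fun j : Fin (k + 1) => j ≠ 0 ∧ j ≠ Fin.last k)).image
                  (fun j => ρ (g j)) = L'.toFinset
              then chainZeta ζ g else 0))
            + (∑ g : Fin (N' + 1) → α,
              if IsChainFrom g y ⊤ ∧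
                  (Finset.univ.filter
                    (fun j : Fin (N' + 1) => j ≠ 0 ∧ j ≠ Fin.last N')).image
                    (fun j => ρ (g j)) = L'.toFinset
                then chainZeta ζ g else 0))
          - ζ x y * (∑ g : Fin (N' + 1) → α,
              if IsChainFrom g y ⊤ ∧
                  (Finset.univ.filter
                    (fun j : Fin (N' + 1) => j ≠ 0 ∧ j ≠ Fin.last N')).image
                    (fun j => ρ (g j)) = L'.toFinset
                then chainZeta ζ g else 0) := by ring
      _ = ζ x y * fbar ρ ζ y L' := by rw [hIH, hvan, sub_zero]

lemma sum_powerset_neg_one_pow_card_Q (V : Finset ℕ) :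
    ∑ U ∈ V.powerset, (-1 : ℚ) ^ U.card = if V = ∅ then 1 else 0 := by
  have h := Finset.sum_powerset_neg_one_pow_card (x := V)
  have h2 : ((∑ U ∈ V.powerset, (-1 : ℤ) ^ U.card : ℤ) : ℚ)
      = ∑ U ∈ V.powerset, (-1 : ℚ) ^ U.card := by push_cast; rfl
  rw [← h2, h]
  split_ifs <;> simp

end EGR7

/-- for an Eulerian quasi-graded poset of rank `n+1`,
the flag `h̄`-vector satisfies `h̄_S = h̄_{S̄}`. -/
theorem flagH_complement {α : Type*} [Fintype α] [PartialOrder α] [BoundedOrder α]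
    (ρ : α → ℕ) (ζ : α → α → ℚ) (hq : IsQuasiGraded ρ ζ) (hE : IsEulerian ρ ζ)
    (n : ℕ) (h0 : ρ (⊥ : α) = 0) (h1 : ρ (⊤ : α) = n + 1)
    (S : Finset ℕ) (hS : S ⊆ Finset.Icc 1 n) :
    flagH ρ ζ (⊥ : α) ⊤ S = flagH ρ ζ (⊥ : α) ⊤ (Finset.Icc 1 n \ S) := by
  classical
  -- step 1 : flagF as fbar
  have hstep1 : ∀ T ⊆ Finset.Icc 1 n,
      flagF ρ ζ (⊥ : α) ⊤ T = EGR7.fbar ρ ζ ⊥ (T.sort (· ≤ ·)) := by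
    intro T hT
    have hchain : List.Chain' (· < ·) (ρ (⊥ : α) :: (T.sort (· ≤ ·) ++ [ρ (⊤ : α)])) := by
      apply List.isChain_iff_pairwise.2
      refine List.pairwise_cons.2 ⟨?_, ?_⟩
      · intro b hb
        rw [h0]
        rcases List.mem_append.1 hb with hb | hb
        · have := Finset.mem_Icc.1 (hT ((Finset.mem_sort _).1 hb)); omega
        · rw [List.mem_singleton.1 hb, h1]; omega
      · refine List.pairwise_append.2 ⟨T.sortedLT_sort.pairwise, List.pairwise_singleton _ _, ?_⟩
        intro a ha b hb
        rw [List.mem_singleton.1 hb, h1]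
        have := Finset.mem_Icc.1 (hT ((Finset.mem_sort _).1 ha)); omega
    have hfc := EGR7.flagF_chain ρ ζ hq (T.sort (· ≤ ·)) ⊥ hchain
    rw [← hfc]
    unfold flagF
    rw [Finset.sort_toFinset]
  -- step 2 : the key identity at ⊥
  have hkey : ∀ U : Finset ℕ, U ⊆ Finset.Icc 1 n →
      ∑ T ∈ (Finset.Icc 1 n).powerset.filter (U ⊆ ·),
        (-1 : ℚ) ^ T.card * EGR7.fbar ρ ζ ⊥ (T.sort (· ≤ ·))
      = (-1) ^ n * EGR7.fbar ρ ζ ⊥ (U.sort (· ≤ ·)) := by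
    intro U hU
    have hk := EGR7.key ρ ζ hq hE n h1 (n + 1) ⊥ (by rw [h0]; omega) (by rw [h0]; omega)
      U (by rw [h0]; simpa using hU)
    rw [h0] at hk
    simpa using hk
  -- inverted form
  have hkey' : ∀ U : Finset ℕ, U ⊆ Finset.Icc 1 n →
      EGR7.fbar ρ ζ ⊥ (U.sort (· ≤ ·))
      = (-1 : ℚ) ^ n * ∑ T ∈ (Finset.Icc 1 n).powerset.filter (U ⊆ ·),
          (-1 : ℚ) ^ T.card * EGR7.fbar ρ ζ ⊥ (T.sort (· ≤ ·)) := by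
    intro U hU
    rw [hkey U hU, ← mul_assoc, EGR7.neg_one_pow_self_mul, one_mul]
  -- step 3 : derived formula for flagH
  have hderiv : ∀ V : Finset ℕ, V ⊆ Finset.Icc 1 n →
      flagH ρ ζ (⊥ : α) ⊤ V
      = (-1 : ℚ) ^ V.card * (-1) ^ n *
          ∑ T ∈ (Finset.Icc 1 n \ V).powerset,
            (-1 : ℚ) ^ T.card * EGR7.fbar ρ ζ ⊥ (T.sort (· ≤ ·)) := by
    intro V hV
    unfold flagH
    have e1 : ∀ U ∈ V.powerset,
        (-1 : ℚ) ^ (V.card - U.card) * flagF ρ ζ (⊥ : α) ⊤ U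
        = ∑ T ∈ (Finset.Icc 1 n).powerset,
            (if U ⊆ T then (-1 : ℚ) ^ V.card * (-1) ^ U.card * ((-1) ^ n *
              ((-1 : ℚ) ^ T.card * EGR7.fbar ρ ζ ⊥ (T.sort (· ≤ ·)))) else 0) := by
      intro U hU
      have hUV : U ⊆ V := Finset.mem_powerset.1 hU
      have hUI : U ⊆ Finset.Icc 1 n := hUV.trans hV
      rw [hstep1 U hUI, EGR7.neg_one_pow_sub (Finset.card_le_card hUV), hkey' U hUI,
        Finset.sum_filter, Finset.mul_sum, Finset.mul_sum]
      refine Finset.sum_congr rfl fun T _ => ?_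
      by_cases h : U ⊆ T
      · rw [if_pos h, if_pos h]
      · rw [if_neg h, if_neg h]; ring
    rw [Finset.sum_congr rfl e1, Finset.sum_comm]
    have e2 : ∀ T ∈ (Finset.Icc 1 n).powerset,
        (∑ U ∈ V.powerset,
          if U ⊆ T then (-1 : ℚ) ^ V.card * (-1) ^ U.card * ((-1) ^ n *
            ((-1 : ℚ) ^ T.card * EGR7.fbar ρ ζ ⊥ (T.sort (· ≤ ·)))) else 0)
        = (if V ∩ T = ∅ then 1 else 0) *
            ((-1 : ℚ) ^ V.card * ((-1) ^ n *
              ((-1 : ℚ) ^ T.card * EGR7.fbar ρ ζ ⊥ (T.sort (· ≤ ·))))) := by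
      intro T _
      rw [← Finset.sum_filter]
      have hfil : V.powerset.filter (· ⊆ T) = (V ∩ T).powerset := by
        ext U
        simp only [Finset.mem_filter, Finset.mem_powerset, Finset.subset_inter_iff]
      rw [hfil]
      rw [← EGR7.sum_powerset_neg_one_pow_card_Q (V ∩ T), Finset.sum_mul]
      refine Finset.sum_congr rfl fun U _ => by ring
    rw [Finset.sum_congr rfl e2]
    have e3 : (Finset.Icc 1 n).powerset.filter (fun T => V ∩ T = ∅)
        = (Finset.Icc 1 n \ V).powerset := by
      ext T
      simp only [Finset.mem_filter, Finset.mem_powerset, Finset.subset_sdiff]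
      constructor
      · rintro ⟨h1', h2'⟩
        exact ⟨h1', Finset.disjoint_left.2 fun a haT haV => by
          have : a ∈ V ∩ T := Finset.mem_inter.2 ⟨haV, haT⟩
          rw [h2'] at this
          exact absurd this (Finset.notMem_empty a)⟩
      · rintro ⟨h1', h2'⟩
        refine ⟨h1', Finset.eq_empty_of_forall_notMem fun a ha => ?_⟩
        rcases Finset.mem_inter.1 ha with ⟨haV, haT⟩
        exact (Finset.disjoint_right.1 h2') haV haT
    simp only [ite_mul, one_mul, zero_mul]
    rw [← Finset.sum_filter, e3, Finset.mul_sum]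
    refine Finset.sum_congr rfl fun T _ => by ring
  -- step 4 : conclude
  have hSb : Finset.Icc 1 n \ S ⊆ Finset.Icc 1 n := Finset.sdiff_subset
  have hIccS : Finset.Icc 1 n \ (Finset.Icc 1 n \ S) = S := Finset.sdiff_sdiff_eq_self hS
  rw [hderiv (Finset.Icc 1 n \ S) hSb, hIccS]
  -- signs
  have hcardIcc : (Finset.Icc 1 n).card = n := by rw [Nat.card_Icc]; omega
  have hScard : S.card ≤ n := by
    have := Finset.card_le_card hS; omega
  have hSbcard : (Finset.Icc 1 n \ S).card = n - S.card := by
    rw [Finset.card_sdiff_of_subset hS, hcardIcc]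
  have hsign : (-1 : ℚ) ^ (Finset.Icc 1 n \ S).card * (-1) ^ n = (-1) ^ S.card := by
    rw [hSbcard, EGR7.neg_one_pow_sub hScard]
    calc (-1 : ℚ) ^ n * (-1) ^ S.card * (-1) ^ n
        = ((-1 : ℚ) ^ n * (-1) ^ n) * (-1) ^ S.card := by ring
      _ = (-1 : ℚ) ^ S.card := by rw [EGR7.neg_one_pow_self_mul, one_mul]
  rw [hsign]
  unfold flagH
  rw [Finset.mul_sum]
  refine Finset.sum_congr rfl fun T hT => ?_
  have hTS : T ⊆ S := Finset.mem_powerset.1 hT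
  rw [hstep1 T (hTS.trans hS), EGR7.neg_one_pow_sub (Finset.card_le_card hTS)]
  ring
end
end

section
/- For a quasi-graded poset (P,ρ,ζ̄) of rank n+1 with 0̂ and 1̂, the value of the inverse weighted zeta function (weighted Möbius function) at the full interval equals μ̄(0̂,1̂) = (−1)^{n+1}·h̄_{{1,…,n}}, where h̄ is the flag h̄-vector. -/
open scoped Classical
open Finset

noncomputable section

variable {α : Type*}

section Aux

variable {α : Type*}

lemma chainZeta_cons (ζ : α → α → ℚ) {k : ℕ} (x₀ : α) (g : Fin (k + 1) → α) :
    chainZeta ζ (Fin.cons x₀ g) = ζ x₀ (g 0) * chainZeta ζ g := by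
  unfold chainZeta
  rw [List.prod_ofFn, List.prod_ofFn, Fin.prod_univ_succ]
  simp only [Fin.castSucc_zero, ← Fin.succ_castSucc, Fin.cons_zero, Fin.cons_succ]

lemma isChainFrom_cons [PartialOrder α] {k : ℕ} (x₀ : α) (g : Fin (k + 1) → α) (x z : α) :
    IsChainFrom (Fin.cons x₀ g) x z ↔
      x₀ = x ∧ x₀ < g 0 ∧ StrictMono g ∧ g (Fin.last k) = z := by
  unfold IsChainFrom
  have h1 : StrictMono (Fin.cons x₀ g : Fin (k + 2) → α) ↔ x₀ < g 0 ∧ StrictMono g :=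
    strictMono_vecCons
  have h2 : (Fin.cons x₀ g : Fin (k + 2) → α) (Fin.last (k + 1)) = g (Fin.last k) := by
    rw [← Fin.succ_last, Fin.cons_succ]
  rw [h1, h2, Fin.cons_zero]
  tauto

lemma strictMono_nat_le {k : ℕ} (g : Fin (k + 1) → ℕ) (hg : StrictMono g) (i : Fin (k + 1)) :
    g 0 + (i : ℕ) ≤ g i := by
  induction i using Fin.induction with
  | zero => simp
  | succ i ih =>
      have h1 : g i.castSucc < g i.succ := hg Fin.castSucc_lt_succ
      have h2 := ih
      simp only [Fin.coe_castSucc] at h2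
      simp only [Fin.val_succ]
      omega

lemma chain_card_le [PartialOrder α] [Fintype α] {k : ℕ} (f : Fin (k + 1) → α)
    (hf : StrictMono f) : k + 1 ≤ Fintype.card α := by
  simpa using Fintype.card_le_of_injective f hf.injective

/-- The alternating chain sum (candidate Möbius function). -/
def muChain [PartialOrder α] [Fintype α] (ζ : α → α → ℚ) (x z : α) : ℚ :=
  ∑ k ∈ Finset.range (Fintype.card α), ∑ f : Fin (k + 1) → α,
    if IsChainFrom f x z then (-1 : ℚ) ^ k * chainZeta ζ f else 0

lemma muChain_self [PartialOrder α] [Fintype α] (ζ : α → α → ℚ) (x : α) :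
    muChain ζ x x = 1 := by
  unfold muChain
  rw [Finset.sum_eq_single_of_mem 0
    (Finset.mem_range.mpr (Fintype.card_pos_iff.mpr ⟨x⟩))]
  · rw [Fintype.sum_eq_single (fun _ : Fin 1 => x)]
    · rw [if_pos]
      · simp [chainZeta]
      · refine ⟨fun i j hij => absurd (Fin.lt_def.mp hij) ?_, rfl, rfl⟩
        have hi := i.isLt; have hj := j.isLt
        omega
    · intro f hf
      rw [if_neg]
      rintro ⟨-, h0, -⟩
      exact hf (funext fun i => by rw [Subsingleton.elim i 0, h0])
  · intro k _ hk
    apply Finset.sum_eq_zero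
    intro f _
    rw [if_neg]
    rintro ⟨hSM, h0, hl⟩
    have : f 0 < f (Fin.last k) := hSM (by
      rw [Fin.lt_def]
      simpa using Nat.pos_of_ne_zero hk)
    rw [h0, hl] at this
    exact lt_irrefl x this

end Aux

section Aux2

variable {α : Type*}

lemma chain_sum_cons [PartialOrder α] [Fintype α] (ζ : α → α → ℚ) {j : ℕ} (x z : α) (w : ℚ) :
    (∑ f : Fin (j + 1 + 1) → α, if IsChainFrom f x z then w * chainZeta ζ f else 0)
      = ∑ y : α, ∑ g : Fin (j + 1) → α,
          if x < y ∧ IsChainFrom g y z then w * (ζ x y * chainZeta ζ g) else 0 := by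
  rw [← Fintype.sum_equiv (Fin.consEquiv fun _ : Fin (j + 1 + 1) => α)
      (fun p => if IsChainFrom (Fin.cons p.1 p.2) x z then w * chainZeta ζ (Fin.cons p.1 p.2)
        else 0)
      (fun f => if IsChainFrom f x z then w * chainZeta ζ f else 0) (fun p => rfl),
    Fintype.sum_prod_type]
  rw [Fintype.sum_eq_single x (fun x₀ hx₀ => Finset.sum_eq_zero fun g _ =>
    if_neg fun hc => hx₀ ((isChainFrom_cons x₀ g x z).mp hc).1)]
  rw [Finset.sum_comm]
  refine Finset.sum_congr rfl fun g _ => ?_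
  rw [Fintype.sum_eq_single (g 0) (fun y hy =>
    if_neg fun hc => hy hc.2.2.1.symm)]
  rw [chainZeta_cons]
  refine if_congr ?_ rfl rfl
  rw [isChainFrom_cons]
  unfold IsChainFrom
  tauto

lemma mu_rec [PartialOrder α] [Fintype α] (ζ : α → α → ℚ) {x z : α} (hxz : x < z) :
    muChain ζ x z =
      -∑ y ∈ Finset.univ.filter (fun y => x < y ∧ y ≤ z), ζ x y * muChain ζ y z := by
  obtain ⟨N, hN⟩ : ∃ N, Fintype.card α = N + 1 :=
    Nat.exists_eq_succ_of_ne_zero (Fintype.card_pos_iff.mpr ⟨x⟩).ne'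
  unfold muChain
  simp only [hN]
  rw [Finset.sum_range_succ']
  have hT0 : (∑ f : Fin (0 + 1) → α,
      if IsChainFrom f x z then (-1 : ℚ) ^ 0 * chainZeta ζ f else 0) = 0 :=
    Finset.sum_eq_zero fun f _ => if_neg fun hc =>
      absurd (hc.2.1.symm.trans hc.2.2) hxz.ne
  rw [hT0, add_zero, Finset.sum_filter]
  have hstep : ∀ j : ℕ, (∑ f : Fin (j + 1 + 1) → α,
      if IsChainFrom f x z then (-1 : ℚ) ^ (j + 1) * chainZeta ζ f else 0)
      = ∑ y : α, ∑ g : Fin (j + 1) → α,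
          if x < y ∧ IsChainFrom g y z then (-1 : ℚ) ^ (j + 1) * (ζ x y * chainZeta ζ g)
          else 0 := fun j => chain_sum_cons ζ x z _
  simp only [hstep]
  rw [Finset.sum_comm, ← Finset.sum_neg_distrib]
  refine Finset.sum_congr rfl fun y _ => ?_
  by_cases h : x < y ∧ y ≤ z
  · rw [if_pos h, Finset.sum_range_succ]
    have hlast : (∑ g : Fin (N + 1) → α,
        if IsChainFrom g y z then (-1 : ℚ) ^ N * chainZeta ζ g else 0) = 0 := by
      refine Finset.sum_eq_zero fun g _ => if_neg fun hc => ?_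
      have hsm : StrictMono (Fin.cons x g : Fin (N + 2) → α) :=
        strictMono_vecCons.mpr ⟨hc.2.1.symm ▸ h.1, hc.1⟩
      have := chain_card_le _ hsm
      omega
    rw [hlast, add_zero, Finset.mul_sum, ← Finset.sum_neg_distrib]
    refine Finset.sum_congr rfl fun j _ => ?_
    rw [Finset.mul_sum, ← Finset.sum_neg_distrib]
    refine Finset.sum_congr rfl fun g _ => ?_
    by_cases hc : IsChainFrom g y z
    · rw [if_pos ⟨h.1, hc⟩, if_pos hc]; ring
    · rw [if_neg fun hh => hc hh.2, if_neg hc]; ring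
  · rw [if_neg h, neg_zero]
    refine Finset.sum_eq_zero fun j _ => Finset.sum_eq_zero fun g _ => if_neg ?_
    rintro ⟨hxy, hc⟩
    have hyz : y ≤ z := by
      rw [← hc.2.1, ← hc.2.2]
      exact hc.1.monotone (Fin.zero_le _)
    exact h ⟨hxy, hyz⟩

end Aux2

section Aux3

variable {α : Type*}

lemma zeta_mul_mu [PartialOrder α] [Fintype α] (ζ : α → α → ℚ) (hζd : ∀ x, ζ x x = 1) :
    iaMul ζ (muChain ζ) = iaDelta := by
  funext x z
  unfold iaMul iaDelta
  by_cases hxz : x ≤ z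
  · rcases eq_or_lt_of_le hxz with rfl | hlt
    · have hf : Finset.univ.filter (fun y => x ≤ y ∧ y ≤ x) = {x} := by
        ext y
        simp only [Finset.mem_filter, Finset.mem_univ, true_and, Finset.mem_singleton]
        constructor
        · rintro ⟨h1, h2⟩; exact le_antisymm h2 h1
        · rintro rfl; exact ⟨le_refl _, le_refl _⟩
      rw [hf, Finset.sum_singleton, hζd, muChain_self, one_mul, if_pos rfl]
    · have hsplit : Finset.univ.filter (fun y => x ≤ y ∧ y ≤ z)
          = insert x (Finset.univ.filter (fun y => x < y ∧ y ≤ z)) := by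
        ext y
        simp only [Finset.mem_insert, Finset.mem_filter, Finset.mem_univ, true_and]
        constructor
        · rintro ⟨hxy, hyz⟩
          rcases eq_or_lt_of_le hxy with rfl | h
          exacts [Or.inl rfl, Or.inr ⟨h, hyz⟩]
        · rintro (rfl | ⟨hy1, hy2⟩)
          exacts [⟨le_refl _, le_of_lt hlt⟩, ⟨hy1.le, hy2⟩]
      have hx : x ∉ Finset.univ.filter (fun y => x < y ∧ y ≤ z) := by simp
      rw [hsplit, Finset.sum_insert hx, hζd, one_mul, mu_rec ζ hlt, if_neg hlt.ne]
      ring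
  · have hf : Finset.univ.filter (fun y => x ≤ y ∧ y ≤ z) = ∅ := by
      refine Finset.filter_eq_empty_iff.mpr fun y _ => ?_
      rintro ⟨h1, h2⟩; exact hxz (h1.trans h2)
    rw [hf, Finset.sum_empty, if_neg fun h => hxz (le_of_eq h)]

lemma iaMul_assoc_s8 [PartialOrder α] [Fintype α] (f g h : α → α → ℚ) :
    iaMul (iaMul f g) h = iaMul f (iaMul g h) := by
  funext x z
  unfold iaMul
  rw [Finset.sum_filter, Finset.sum_filter]
  have hL : ∀ y : α, (if x ≤ y ∧ y ≤ z then
        (∑ w ∈ Finset.univ.filter fun w => x ≤ w ∧ w ≤ y, f x w * g w y) * h y z else 0)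
      = ∑ w : α, (if (x ≤ y ∧ y ≤ z) ∧ x ≤ w ∧ w ≤ y then f x w * g w y * h y z else 0) := by
    intro y
    by_cases P : x ≤ y ∧ y ≤ z
    · rw [if_pos P, Finset.sum_filter, Finset.sum_mul]
      exact Finset.sum_congr rfl fun w _ => by
        rw [ite_mul, zero_mul]
        exact if_congr (by tauto) rfl rfl
    · rw [if_neg P]
      exact (Finset.sum_eq_zero fun w _ => if_neg (by tauto)).symm
  have hR : ∀ w : α, (if x ≤ w ∧ w ≤ z then
        f x w * ∑ y ∈ Finset.univ.filter fun y => w ≤ y ∧ y ≤ z, g w y * h y z else 0)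
      = ∑ y : α, (if (x ≤ w ∧ w ≤ z) ∧ w ≤ y ∧ y ≤ z then f x w * (g w y * h y z) else 0) := by
    intro w
    by_cases P : x ≤ w ∧ w ≤ z
    · rw [if_pos P, Finset.sum_filter, Finset.mul_sum]
      exact Finset.sum_congr rfl fun y _ => by
        rw [mul_ite, mul_zero]
        exact if_congr (by tauto) rfl rfl
    · rw [if_neg P]
      exact (Finset.sum_eq_zero fun y _ => if_neg (by tauto)).symm
  simp only [hL, hR]
  rw [Finset.sum_comm]
  refine Finset.sum_congr rfl fun w _ => Finset.sum_congr rfl fun y _ => ?_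
  refine if_congr ?_ (mul_assoc _ _ _) rfl
  constructor
  · rintro ⟨⟨hxy, hyz⟩, hxw, hwy⟩; exact ⟨⟨hxw, hwy.trans hyz⟩, hwy, hyz⟩
  · rintro ⟨⟨hxw, _⟩, hwy, hyz⟩; exact ⟨⟨hxw.trans hwy, hyz⟩, hxw, hwy⟩

lemma delta_mul [PartialOrder α] [Fintype α] (h : α → α → ℚ) {x z : α} (hxz : x ≤ z) :
    iaMul iaDelta h x z = h x z := by
  unfold iaMul iaDelta
  rw [Finset.sum_eq_single_of_mem x (by simp [hxz])
    (fun y _ hy => by rw [if_neg fun e => hy e.symm, zero_mul])]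
  rw [if_pos rfl, one_mul]

lemma mul_delta [PartialOrder α] [Fintype α] (h : α → α → ℚ) {x z : α} (hxz : x ≤ z) :
    iaMul h iaDelta x z = h x z := by
  unfold iaMul iaDelta
  rw [Finset.sum_eq_single_of_mem z (by simp [hxz])
    (fun y _ hy => by rw [if_neg hy, mul_zero])]
  rw [if_pos rfl, mul_one]

lemma flagH_full [PartialOrder α] [Fintype α] [BoundedOrder α] (ρ : α → ℕ) (ζ : α → α → ℚ)
    (hρ : StrictMono ρ) (n : ℕ) (h0 : ρ (⊥ : α) = 0) (h1 : ρ (⊤ : α) = n + 1) :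
    (-1 : ℚ) ^ (n + 1) * flagH ρ ζ (⊥ : α) ⊤ (Finset.Icc 1 n) = muChain ζ ⊥ ⊤ := by
  unfold flagH flagF muChain
  rw [Finset.mul_sum]
  simp only [Finset.mul_sum, mul_ite, mul_zero]
  rw [Finset.sum_comm]
  refine Finset.sum_congr rfl fun k _ => ?_
  rw [Finset.sum_comm]
  refine Finset.sum_congr rfl fun f _ => ?_
  by_cases hc : IsChainFrom f (⊥ : α) ⊤
  · rw [if_pos hc]
    obtain ⟨k', rfl⟩ : ∃ k', k = k' + 1 := by
      refine Nat.exists_eq_succ_of_ne_zero fun hk => ?_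
      subst hk
      have hbt : (⊥ : α) = ⊤ := hc.2.1.symm.trans (by simpa using hc.2.2)
      have := congrArg ρ hbt
      rw [h0, h1] at this
      omega
    set S₀ := (Finset.univ.filter
        (fun i : Fin (k' + 1 + 1) => i ≠ 0 ∧ i ≠ Fin.last (k' + 1))).image
      (fun i => ρ (f i)) with hS₀
    have hSsub : S₀ ⊆ Finset.Icc 1 n := by
      intro r hr
      obtain ⟨i, hi, rfl⟩ := Finset.mem_image.mp hr
      obtain ⟨-, hi0, hil⟩ := Finset.mem_filter.mp hi
      have hb : (⊥ : α) < f i := hc.2.1 ▸ hc.1 (Fin.pos_of_ne_zero hi0)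
      have ht : f i < ⊤ := hc.2.2 ▸ hc.1 ((Fin.le_last i).lt_of_ne hil)
      have hb' := hρ hb
      have ht' := hρ ht
      rw [h0] at hb'
      rw [h1] at ht'
      exact Finset.mem_Icc.mpr ⟨by omega, by omega⟩
    have h0l : (0 : Fin (k' + 1 + 1)) ≠ Fin.last (k' + 1) := by
      simp [Fin.ext_iff]
    have hfilter : Finset.univ.filter
          (fun i : Fin (k' + 1 + 1) => i ≠ 0 ∧ i ≠ Fin.last (k' + 1))
        = Finset.univ \ {0, Fin.last (k' + 1)} := by
      ext i
      simp only [Finset.mem_filter, Finset.mem_univ, true_and, Finset.mem_sdiff,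
        Finset.mem_insert, Finset.mem_singleton]
      tauto
    have hinj : Set.InjOn (fun i : Fin (k' + 1 + 1) => ρ (f i))
        ↑(Finset.univ.filter
          (fun i : Fin (k' + 1 + 1) => i ≠ 0 ∧ i ≠ Fin.last (k' + 1))) :=
      fun i _ j _ hij => (hρ.comp hc.1).injective hij
    have hScard : S₀.card = k' := by
      rw [hS₀, Finset.card_image_of_injOn hinj, hfilter,
        Finset.card_sdiff_of_subset (Finset.subset_univ _), Finset.card_pair h0l]
      simp
    have hk'n : k' ≤ n := by
      have := Finset.card_le_card hSsub
      rw [hScard, Nat.card_Icc] at this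
      omega
    rw [Finset.sum_eq_single_of_mem S₀ (Finset.mem_powerset.mpr hSsub)
      (fun T _ hT => if_neg (by rintro ⟨-, rfl⟩; exact hT rfl))]
    rw [if_pos ⟨hc, rfl⟩, Nat.card_Icc, ← mul_assoc, ← pow_add, hScard]
    have harith : n + 1 + (n + 1 - 1 - k') = (k' + 1) + 2 * (n - k') := by omega
    rw [harith, pow_add, pow_mul]
    norm_num
  · rw [if_neg hc]
    exact Finset.sum_eq_zero fun T _ => if_neg fun hh => hc hh.1

end Aux3

/-- `μ̄(0̂,1̂) = (-1)^{n+1} h̄_{{1,…,n}}`. -/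
theorem mu_eq_flagH_full {α : Type*} [Fintype α] [PartialOrder α] [BoundedOrder α]
    (ρ : α → ℕ) (ζ : α → α → ℚ) (hq : IsQuasiGraded ρ ζ)
    (n : ℕ) (h0 : ρ (⊥ : α) = 0) (h1 : ρ (⊤ : α) = n + 1)
    (m : α → α → ℚ) (hm₁ : iaMul ζ m = iaDelta) (hm₂ : iaMul m ζ = iaDelta) :
    m (⊥ : α) ⊤ = (-1 : ℚ) ^ (n + 1) * flagH ρ ζ (⊥ : α) ⊤ (Finset.Icc 1 n) := by
  have hmu := flagH_full ρ ζ hq.1 n h0 h1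
  have hzm : iaMul ζ (muChain ζ) = iaDelta := zeta_mul_mu ζ hq.2.1
  have e1 : m (⊥ : α) ⊤ = iaMul m iaDelta (⊥ : α) ⊤ := (mul_delta m le_top).symm
  rw [e1, ← hzm, ← iaMul_assoc_s8, hm₂, delta_mul (muChain ζ) (bot_le : (⊥:α) ≤ ⊤)]
  exact hmu.symm
end
end
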